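/- arXiv:1007.4236 — 9 statements merged into one kernel-verified Lean document; each statement's English description precedes it below -/
import Mathlib

section
/- Let a ≠ b be elements of {1,…,n} and let τ = t_m, …, t_1 be a transposition decomposition of the transposition swapping a and b such that no t_i equals this transposition. Then at least one t_i moves a, at least one t_i moves b, and the number of indices i such that t_i moves a plus the number of indices i such that t_i moves b is at least 3. -/
private lemma fix_prod {G : Type*} (l : List (Equiv.Perm G)) (x : G)
    (h : ∀ t ∈ l, t x = x) : l.prod x = x := by
  induction l with
  | nil => simp
  | cons t l ih =>
    rw [List.prod_cons, Equiv.Perm.mul_apply,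
      ih (fun s hs => h s (List.mem_cons_of_mem _ hs)), h t (List.mem_cons_self)]

private lemma exists_split {α : Type*} (p : α → Bool) (l : List α) (h : 0 < l.countP p) :
    ∃ l1 x l2, l = l1 ++ x :: l2 ∧ p x ∧ l1.countP p = 0 := by
  induction l with
  | nil => simp at h
  | cons y l ih =>
    by_cases hy : p y
    · exact ⟨[], y, l, rfl, hy, by simp⟩
    · rw [List.countP_cons, if_neg hy] at h
      obtain ⟨l1, x, l2, rfl, hx, h0⟩ := ih (by simpa using h)
      exact ⟨y :: l1, x, l2, rfl, hx, by simp [List.countP_cons, hy, h0]⟩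

private lemma swap_of_moves {α : Type*} [DecidableEq α] {t : Equiv.Perm α} {a b : α}
    (hab : a ≠ b) (hu : ∃ x y, x ≠ y ∧ t = Equiv.swap x y) (h : t a = b) :
    t = Equiv.swap a b := by
  obtain ⟨x, y, hxy, rfl⟩ := hu
  rcases eq_or_ne a x with rfl | hax
  · rw [Equiv.swap_apply_left] at h; rw [h]
  · rcases eq_or_ne a y with rfl | hay
    · rw [Equiv.swap_apply_right] at h
      rw [h, Equiv.swap_comm]
    · rw [Equiv.swap_apply_of_ne_of_ne hax hay] at h
      exact absurd h hab

private lemma key {n : ℕ} {a b : Fin n} (hab : a ≠ b) (l : List (Equiv.Perm (Fin n)))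
    (htrans : ∀ t ∈ l, ∃ x y : Fin n, x ≠ y ∧ t = Equiv.swap x y)
    (hne : ∀ t ∈ l, t ≠ Equiv.swap a b)
    (pa : l.prod a = b)
    (hcA : l.countP (fun t => decide (t a ≠ a)) = 1) :
    ∃ l1 t l2, l = l1 ++ t :: l2 ∧
      l1.countP (fun t => decide (t a ≠ a)) = 0 ∧
      0 < l1.countP (fun t => decide (t b ≠ b)) := by
  obtain ⟨l1, t, l2, rfl, hpt, h0⟩ :=
    exists_split (fun t => decide (t a ≠ a)) l (by omega)
  refine ⟨l1, t, l2, rfl, h0, ?_⟩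
  have h2 : l2.countP (fun t => decide (t a ≠ a)) = 0 := by
    rw [List.countP_append, List.countP_cons, if_pos hpt, h0] at hcA
    omega
  have hfix2 : l2.prod a = a := fix_prod _ _ (fun s hs => by
    have := List.countP_eq_zero.mp h2 s hs; simpa using this)
  have hta : t a ≠ a := by simpa using hpt
  have htab : t a ≠ b := fun h =>
    hne t (by simp) (swap_of_moves hab (htrans t (by simp)) h)
  rw [List.countP_pos_iff]
  by_contra hq
  push_neg at hq
  have hfix1 : ∀ s ∈ l1, s b = b := fun s hs => by
    have := hq s hs; simpa using this
  have hmain : l1.prod (t a) = b := by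
    rw [List.prod_append, List.prod_cons, Equiv.Perm.mul_apply, Equiv.Perm.mul_apply,
      hfix2] at pa
    exact pa
  have hb : l1.prod b = b := fix_prod _ _ hfix1
  exact htab (l1.prod.injective (hmain.trans hb.symm))

/-- Let `a ≠ b` in `{1,…,n}` (modeled as `Fin n`) and let `τ = t_m, …, t_1`
be a transposition decomposition of `swap a b` in which no `t_i` equals `swap a b`.
Then some `t_i` moves `a`, some `t_i` moves `b`, and the number of indices `i` with
`t_i` moving `a` plus the number of indices with `t_i` moving `b` is at least `3`. -/
theorem stmt0 {n : ℕ} (a b : Fin n) (hab : a ≠ b)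
    (l : List (Equiv.Perm (Fin n)))
    (htrans : ∀ t ∈ l, ∃ x y : Fin n, x ≠ y ∧ t = Equiv.swap x y)
    (hprod : l.prod = Equiv.swap a b)
    (hne : ∀ t ∈ l, t ≠ Equiv.swap a b) :
    (∃ t ∈ l, t a ≠ a) ∧ (∃ t ∈ l, t b ≠ b) ∧
      3 ≤ l.countP (fun t => decide (t a ≠ a)) + l.countP (fun t => decide (t b ≠ b)) := by
  have pa : l.prod a = b := by rw [hprod]; exact Equiv.swap_apply_left a b
  have pb : l.prod b = a := by rw [hprod]; exact Equiv.swap_apply_right a b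
  have hA : ∃ t ∈ l, t a ≠ a := by
    by_contra h
    push_neg at h
    have h2 := fix_prod l a h
    rw [pa] at h2
    exact hab h2.symm
  have hB : ∃ t ∈ l, t b ≠ b := by
    by_contra h
    push_neg at h
    have h2 := fix_prod l b h
    rw [pb] at h2
    exact hab h2
  refine ⟨hA, hB, ?_⟩
  have hcA : 0 < l.countP (fun t => decide (t a ≠ a)) := by
    rw [List.countP_pos_iff]
    obtain ⟨t, ht, ht2⟩ := hA
    exact ⟨t, ht, by simpa using ht2⟩
  have hcB : 0 < l.countP (fun t => decide (t b ≠ b)) := by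
    rw [List.countP_pos_iff]
    obtain ⟨t, ht, ht2⟩ := hB
    exact ⟨t, ht, by simpa using ht2⟩
  by_contra hlt
  have hcA1 : l.countP (fun t => decide (t a ≠ a)) = 1 := by omega
  have hcB1 : l.countP (fun t => decide (t b ≠ b)) = 1 := by omega
  have hne' : ∀ t ∈ l, t ≠ Equiv.swap b a := fun t ht => by
    rw [Equiv.swap_comm]; exact hne t ht
  obtain ⟨A1, t, A2, hAl, hA0, hAq⟩ := key hab l htrans hne pa hcA1
  obtain ⟨B1, t', B2, hBl, hB0, hBq⟩ := key hab.symm l htrans hne' pb hcB1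
  have hA1 : A1 = l.take A1.length := by rw [hAl, List.take_left]
  have hB1 : B1 = l.take B1.length := by rw [hBl, List.take_left]
  have h1 : A1.length < B1.length := by
    by_contra h
    push_neg at h
    have heq : A1.take B1.length = B1 := by
      conv_lhs => rw [hA1]
      rw [List.take_take, min_eq_left h]
      exact hB1.symm
    have hsub : B1.Sublist A1 := heq ▸ List.take_sublist _ A1
    have := hsub.countP_le (p := fun t => decide (t a ≠ a))
    omega
  have h2 : B1.length < A1.length := by
    by_contra h
    push_neg at h
    have heq : B1.take A1.length = A1 := by
      conv_lhs => rw [hB1]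
      rw [List.take_take, min_eq_left h]
      exact hA1.symm
    have hsub : A1.Sublist B1 := heq ▸ List.take_sublist _ B1
    have := hsub.countP_le (p := fun t => decide (t b ≠ b))
    omega
  omega
end

section
/- Let a ≠ b be elements of {1,…,n} and let τ = t_m, …, t_1 be a transposition decomposition of the transposition swapping a and b such that no t_i equals this transposition. Then the number of elements of {1,…,n} other than a and b that are moved by at least one transposition of τ is at most m − 2. -/
open Equiv

private lemma prodFix {n : ℕ} (l : List (Equiv.Perm (Fin n))) (x : Fin n)
    (h : ∀ t ∈ l, t x = x) : l.prod x = x := by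
  induction l with
  | nil => simp
  | cons t l ih =>
    simp only [List.prod_cons, Equiv.Perm.mul_apply]
    rw [ih (fun s hs => h s (List.mem_cons_of_mem _ hs)), h t (List.mem_cons_self)]

private lemma keyLem {n : ℕ} (C E : List (Equiv.Perm (Fin n))) (s : Equiv.Perm (Fin n))
    (u v : Fin n) (hsv : s v = v)
    (hE : ∀ t ∈ E, t u = u) (hC : ∀ t ∈ C, t v = v)
    (hprod : (C ++ s :: E).prod u = v) : u = v := by
  rw [List.prod_append, List.prod_cons] at hprod
  have h1 : E.prod u = u := prodFix E u hE
  have h2 : C.prod v = v := prodFix C v hC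
  simp only [Equiv.Perm.mul_apply, h1] at hprod
  have h3 : s u = v := C.prod.injective (hprod.trans h2.symm)
  exact s.injective (h3.trans hsv.symm)

private lemma zeroCount {n : ℕ} (l : List (Equiv.Perm (Fin n))) (x : Fin n)
    (h : l.countP (fun t => t x ≠ x) = 0) : ∀ t ∈ l, t x = x := by
  intro t ht
  have := List.countP_eq_zero.mp h t ht
  simpa using this

private lemma twoLeCount {n : ℕ} (l : List (Equiv.Perm (Fin n))) (x : Fin n)
    (hfix : l.prod x = x) (hmove : ∃ t ∈ l, t x ≠ x) :
    2 ≤ l.countP (fun t => t x ≠ x) := by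
  obtain ⟨t, ht, htx⟩ := hmove
  obtain ⟨A, B, rfl⟩ := List.append_of_mem ht
  rw [List.countP_append, List.countP_cons]
  have hpt : decide (t x ≠ x) = true := by simpa using htx
  rw [hpt, if_pos rfl]
  by_contra hlt
  push_neg at hlt
  have hA : A.countP (fun s => s x ≠ x) = 0 := by omega
  have hB : B.countP (fun s => s x ≠ x) = 0 := by omega
  rw [List.prod_append, List.prod_cons] at hfix
  have h1 : B.prod x = x := prodFix B x (zeroCount _ _ hB)
  have h2 : A.prod x = x := prodFix A x (zeroCount _ _ hA)
  simp only [Equiv.Perm.mul_apply, h1] at hfix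
  exact htx (A.prod.injective (hfix.trans h2.symm))

private lemma sumCount {n : ℕ} (l : List (Equiv.Perm (Fin n)))
    (htrans : ∀ t ∈ l, ∃ x y : Fin n, x ≠ y ∧ t = Equiv.swap x y) :
    ∑ x : Fin n, l.countP (fun t => t x ≠ x) = 2 * l.length := by
  induction l with
  | nil => simp
  | cons t l ih =>
    simp only [List.countP_cons, List.length_cons]
    rw [Finset.sum_add_distrib, ih (fun s hs => htrans s (List.mem_cons_of_mem _ hs))]
    obtain ⟨x, y, hxy, rfl⟩ := htrans t (List.mem_cons_self)
    have : ∑ z : Fin n, (if (fun s : Equiv.Perm (Fin n) => decide (s z ≠ z)) (Equiv.swap x y) then 1 else 0)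
        = (Finset.univ.filter fun z : Fin n => Equiv.swap x y z ≠ z).card := by
      rw [Finset.card_filter]
      refine Finset.sum_congr rfl fun z _ => ?_
      by_cases h : Equiv.swap x y z ≠ z <;> simp [h]
    rw [this]
    have hsupp : (Finset.univ.filter fun z : Fin n => Equiv.swap x y z ≠ z)
        = (Equiv.swap x y).support := rfl
    rw [hsupp, Equiv.Perm.card_support_swap hxy]
    ring

private lemma threeLe {n : ℕ} (a b : Fin n) (hab : a ≠ b)
    (l : List (Equiv.Perm (Fin n)))
    (htrans : ∀ t ∈ l, ∃ x y : Fin n, x ≠ y ∧ t = Equiv.swap x y)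
    (hprod : l.prod = Equiv.swap a b)
    (hne : ∀ t ∈ l, t ≠ Equiv.swap a b) :
    3 ≤ l.countP (fun t => t a ≠ a) + l.countP (fun t => t b ≠ b) := by
  -- every t in l moving both a and b would equal swap a b
  have honly : ∀ t ∈ l, t a ≠ a → t b = b := by
    intro t ht hta
    by_contra htb
    obtain ⟨x, y, hxy, rfl⟩ := htrans t ht
    have hsupp := Equiv.Perm.support_swap hxy
    have ha' : a ∈ (Equiv.swap x y).support := Equiv.Perm.mem_support.mpr hta
    have hb' : b ∈ (Equiv.swap x y).support := Equiv.Perm.mem_support.mpr htb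
    rw [hsupp, Finset.mem_insert, Finset.mem_singleton] at ha' hb'
    apply hne _ ht
    rcases ha' with rfl | rfl <;> rcases hb' with rfl | rfl
    · exact absurd rfl hab
    · rfl
    · exact Equiv.swap_comm _ _
    · exact absurd rfl hab
  have honly' : ∀ t ∈ l, t b ≠ b → t a = a := by
    intro t ht htb
    by_contra hta
    exact htb (honly t ht hta)
  have hda : 0 < l.countP (fun t => t a ≠ a) := by
    rw [List.countP_pos_iff]
    by_contra h
    push_neg at h
    have : l.prod a = a := prodFix l a (fun t ht => by
      by_contra h'
      exact absurd (by simpa using h t ht) h')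
    rw [hprod, Equiv.swap_apply_left] at this
    exact hab this.symm
  have hdb : 0 < l.countP (fun t => t b ≠ b) := by
    rw [List.countP_pos_iff]
    by_contra h
    push_neg at h
    have : l.prod b = b := prodFix l b (fun t ht => by
      by_contra h'
      exact absurd (by simpa using h t ht) h')
    rw [hprod, Equiv.swap_apply_right] at this
    exact hab this
  by_contra hlt
  push_neg at hlt
  have hda1 : l.countP (fun t => t a ≠ a) = 1 := by omega
  have hdb1 : l.countP (fun t => t b ≠ b) = 1 := by omega
  -- the unique mover of a
  obtain ⟨t, ht, hta⟩ := List.countP_pos_iff.mp hda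
  have hta : t a ≠ a := by simpa using hta
  have htb : t b = b := honly t ht hta
  obtain ⟨A, B, rfl⟩ := List.append_of_mem ht
  have hcA : (A ++ t :: B).countP (fun s => s a ≠ a)
      = A.countP (fun s => s a ≠ a) + (B.countP (fun s => s a ≠ a) + 1) := by
    rw [List.countP_append, List.countP_cons]
    simp [hta]
  rw [hda1] at hcA
  have hAa : A.countP (fun s => s a ≠ a) = 0 := by omega
  have hBa : B.countP (fun s => s a ≠ a) = 0 := by omega
  -- the unique mover of b
  obtain ⟨s, hs, hsb⟩ := List.countP_pos_iff.mp hdb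
  have hsb : s b ≠ b := by simpa using hsb
  have hsa : s a = a := honly' s hs hsb
  have hprodab : (A ++ t :: B).prod a = b := by rw [hprod, Equiv.swap_apply_left]
  have hprodba : (A ++ t :: B).prod b = a := by rw [hprod, Equiv.swap_apply_right]
  rcases List.mem_append.mp hs with hsA | hsB
  · -- s in A : use keyLem on l = C ++ s :: (D ++ t :: B), point b
    obtain ⟨C, D, rfl⟩ := List.append_of_mem hsA
    have hcount : ((C ++ s :: D) ++ t :: B).countP (fun r => r b ≠ b)
        = C.countP (fun r => r b ≠ b) + (1 + (D ++ t :: B).countP (fun r => r b ≠ b)) := by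
      rw [List.countP_append, List.countP_append, List.countP_cons, List.countP_cons]
      simp [hsb, htb]
      ring
    rw [hdb1] at hcount
    have hrest : (D ++ t :: B).countP (fun r => r b ≠ b) = 0 := by omega
    have hCc : C.countP (fun r => r a ≠ a) = 0 := by
      have := List.countP_append (p := fun r : Equiv.Perm (Fin n) => decide (r a ≠ a)) (l₁ := C) (l₂ := s :: D)
      omega
    have : b = a := by
      apply keyLem C (D ++ t :: B) s b a hsa
        (zeroCount _ _ hrest) (zeroCount _ _ hCc)
      rw [List.append_assoc] at hprodba
      simpa using hprodba
    exact hab this.symm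
  · rcases List.mem_cons.mp hsB with rfl | hsB
    · exact hsb htb
    · -- s in B : use keyLem on l = A ++ t :: B, point a
      have hAb : A.countP (fun r => r b ≠ b) = 0 := by
        have h1 : 0 < B.countP (fun r => r b ≠ b) :=
          List.countP_pos_iff.mpr ⟨s, hsB, by simpa using hsb⟩
        have h2 := List.countP_append (p := fun r : Equiv.Perm (Fin n) => decide (r b ≠ b)) (l₁ := A) (l₂ := t :: B)
        have h3 : (t :: B).countP (fun r : Equiv.Perm (Fin n) => decide (r b ≠ b))
            = B.countP (fun r => r b ≠ b) := by
          rw [List.countP_cons]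
          simp [htb]
        omega
      have : a = b := keyLem A B t a b htb (zeroCount _ _ hBa) (zeroCount _ _ hAb) hprodab
      exact hab this

/-- Let `a ≠ b` in `{1,…,n}` (modeled as `Fin n`) and let `τ = t_m, …, t_1`
be a transposition decomposition of `swap a b` in which no `t_i` equals `swap a b`.
Then the number of elements other than `a` and `b` that are moved by at least one
transposition of `τ` is at most `m − 2`. -/
theorem stmt1 {n : ℕ} (a b : Fin n) (hab : a ≠ b)
    (l : List (Equiv.Perm (Fin n)))
    (htrans : ∀ t ∈ l, ∃ x y : Fin n, x ≠ y ∧ t = Equiv.swap x y)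
    (hprod : l.prod = Equiv.swap a b)
    (hne : ∀ t ∈ l, t ≠ Equiv.swap a b) :
    (Finset.univ.filter fun x : Fin n => x ≠ a ∧ x ≠ b ∧ ∃ t ∈ l, t x ≠ x).card
      ≤ l.length - 2 := by
  set F := Finset.univ.filter fun x : Fin n => x ≠ a ∧ x ≠ b ∧ ∃ t ∈ l, t x ≠ x with hF
  set d := fun x : Fin n => l.countP (fun t => t x ≠ x) with hd
  have hsum : ∑ x : Fin n, d x = 2 * l.length := sumCount l htrans
  have hFsum : 2 * F.card ≤ ∑ x ∈ F, d x := by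
    rw [Finset.card_eq_sum_ones, Finset.mul_sum]
    refine Finset.sum_le_sum fun x hx => ?_
    rw [hF, Finset.mem_filter] at hx
    obtain ⟨-, hxa, hxb, hmove⟩ := hx
    have hfix : l.prod x = x := by
      rw [hprod]; exact Equiv.swap_apply_of_ne_of_ne hxa hxb
    show 2 * 1 ≤ d x
    rw [Nat.mul_one, hd]
    exact twoLeCount l x hfix hmove
  have hab3 : 3 ≤ d a + d b := threeLe a b hab l htrans hprod hne
  have hcompl : ∑ x ∈ F, d x + (d a + d b) ≤ ∑ x : Fin n, d x := by
    have haF : a ∉ F := by simp [hF]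
    have hbF : b ∉ F := by simp [hF]
    have hsub : insert a (insert b F) ⊆ Finset.univ := Finset.subset_univ _
    have := Finset.sum_le_sum_of_subset (f := d) hsub
    rw [Finset.sum_insert (by simp [hab, haF]), Finset.sum_insert hbF] at this
    omega
  have : 2 * F.card + 3 ≤ 2 * l.length := by omega
  omega
end

section
/- Let a ≠ b be elements of {1,…,n} and let τ = t_m, …, t_1 be a transposition decomposition of the transposition swapping a and b. Suppose t_i swaps x and y and is an a,b-cut edge of τ, where x lies in the same connected component as a in the simple graph on {1,…,n} whose edge set is {{a_j,b_j} : j ≠ i}. Then, writing π_j = t_j ∘ ⋯ ∘ t_1 (with π_0 the identity), one has π_{i−1}(a) = x, π_{i−1}(b) = y, π_i(a) = y, and π_i(b) = x. -/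
lemma reach_swap {V : Type*} [DecidableEq V] (G : SimpleGraph V) {u v : V}
    (h : G.Adj u v) (z : V) : G.Reachable z (Equiv.swap u v z) := by
  rcases eq_or_ne z u with rfl | hu
  · rw [Equiv.swap_apply_left]; exact h.reachable
  rcases eq_or_ne z v with rfl | hv
  · rw [Equiv.swap_apply_right]; exact h.symm.reachable
  · rw [Equiv.swap_apply_of_ne_of_ne hu hv]

lemma reach_prod {V : Type*} (G : SimpleGraph V) (l : List (Equiv.Perm V))
    (h : ∀ p ∈ l, ∀ z, G.Reachable z (p z)) (z : V) : G.Reachable z (l.prod z) := by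
  induction l generalizing z with
  | nil => simpa using SimpleGraph.Reachable.refl z
  | cons p l ih =>
    rw [List.prod_cons, Equiv.Perm.mul_apply]
    exact (ih (fun q hq w => h q (List.mem_cons_of_mem _ hq) w) z).trans
      (h p List.mem_cons_self _)

/-- Let `a ≠ b` and let `t_m, …, t_1` (here `t j` for `1 ≤ j ≤ m`) be a
transposition decomposition of `swap a b`.  Suppose `t i = swap x y` is an `a,b`-cut edge,
i.e. `a` and `b` are not connected in the simple graph whose edges are the pairs swapped by
the `t j`, `j ≠ i`, and suppose `x` is in the connected component of `a` in that graph.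
Then, with `π_j = t_j ∘ ⋯ ∘ t_1`, we have `π_{i−1} a = x`, `π_{i−1} b = y`,
`π_i a = y` and `π_i b = x`. -/
theorem stmt2 {n : ℕ} (a b : Fin n) (hab : a ≠ b) (m : ℕ)
    (t : ℕ → Equiv.Perm (Fin n))
    (htrans : ∀ j, 1 ≤ j → j ≤ m → ∃ x y : Fin n, x ≠ y ∧ t j = Equiv.swap x y)
    (hprod : (((List.range' 1 m).map t).reverse).prod = Equiv.swap a b)
    (i : ℕ) (hi1 : 1 ≤ i) (him : i ≤ m)
    (x y : Fin n) (hxy : x ≠ y) (hti : t i = Equiv.swap x y)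
    (G : SimpleGraph (Fin n))
    (hG : G = SimpleGraph.fromRel fun u v =>
      ∃ j, 1 ≤ j ∧ j ≤ m ∧ j ≠ i ∧ t j = Equiv.swap u v)
    (hcut : ¬ G.Reachable a b)
    (hax : G.Reachable a x) :
    (((List.range' 1 (i - 1)).map t).reverse).prod a = x ∧
    (((List.range' 1 (i - 1)).map t).reverse).prod b = y ∧
    (((List.range' 1 i).map t).reverse).prod a = y ∧
    (((List.range' 1 i).map t).reverse).prod b = x := by
  classical
  set P : Equiv.Perm (Fin n) := (((List.range' 1 (i - 1)).map t).reverse).prod with hP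
  set S : Equiv.Perm (Fin n) := (((List.range' (i + 1) (m - i)).map t).reverse).prod with hS
  -- generic reachability for products of edge swaps
  have key : ∀ (l : List ℕ), (∀ j ∈ l, 1 ≤ j ∧ j ≤ m ∧ j ≠ i) →
      ∀ z, G.Reachable z ((((l.map t)).reverse).prod z) := by
    intro l hl z
    apply reach_prod
    intro p hp w
    rw [List.mem_reverse, List.mem_map] at hp
    obtain ⟨j, hj, rfl⟩ := hp
    obtain ⟨hj1, hjm, hji⟩ := hl j hj
    obtain ⟨u, v, huv, hjuv⟩ := htrans j hj1 hjm
    rw [hjuv]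
    apply reach_swap
    rw [hG]
    exact ⟨huv, Or.inl ⟨j, hj1, hjm, hji, hjuv⟩⟩
  have hmem1 : ∀ j ∈ List.range' 1 (i - 1), 1 ≤ j ∧ j ≤ m ∧ j ≠ i := by
    intro j hj
    rw [List.mem_range'_1] at hj
    omega
  have hmem2 : ∀ j ∈ List.range' (i + 1) (m - i), 1 ≤ j ∧ j ≤ m ∧ j ≠ i := by
    intro j hj
    rw [List.mem_range'_1] at hj
    omega
  have hPa : G.Reachable a (P a) := key _ hmem1 a
  have hPb : G.Reachable b (P b) := key _ hmem1 b
  have hSz : ∀ z, G.Reachable z (S z) := key _ hmem2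
  -- split the product
  have hsplit : List.range' 1 m = List.range' 1 (i - 1) ++ (i :: List.range' (i + 1) (m - i)) := by
    have h1 : List.range' 1 (i - 1) ++ List.range' i (m - i + 1) = List.range' 1 m := by
      have := List.range'_append_1 (s := 1) (m := i - 1) (n := m - i + 1)
      rw [show 1 + (i - 1) = i by omega, show i - 1 + (m - i + 1) = m by omega] at this
      exact this
    rw [← h1, List.range'_succ]
  have hdecomp : Equiv.swap a b = S * (t i * P) := by
    rw [← hprod, hsplit]
    simp [List.reverse_append, List.prod_append, mul_assoc, P, S]
  have happ : ∀ z, S (t i (P z)) = Equiv.swap a b z := by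
    intro z
    rw [hdecomp]; rfl
  -- π_{i-1} a = x
  have hPax : P a = x := by
    by_contra hne
    rcases eq_or_ne (P a) y with hy | hny
    · -- P a = y : then t i (P a) = x, S x = b, so a ~ x ~ b
      have : S x = b := by
        have := happ a
        rw [hy, hti, Equiv.swap_apply_right, Equiv.swap_apply_left] at this
        exact this
      exact hcut (hax.trans (this ▸ hSz x))
    · -- P a ∉ {x,y} : t i fixes it, S (P a) = b
      have : S (P a) = b := by
        have := happ a
        rw [hti, Equiv.swap_apply_of_ne_of_ne hne hny, Equiv.swap_apply_left] at this
        exact this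
      exact hcut (hPa.trans (this ▸ hSz (P a)))
  have hPby : P b = y := by
    by_contra hne
    rcases eq_or_ne (P b) x with hx | hnx
    · exact hcut (hax.trans (hx ▸ hPb).symm)
    · have : S (P b) = a := by
        have := happ b
        rw [hti, Equiv.swap_apply_of_ne_of_ne hnx hne, Equiv.swap_apply_right] at this
        exact this
      exact hcut ((hPb.trans (this ▸ hSz (P b))).symm)
  -- π_i = t i * P
  have hpi : (((List.range' 1 i).map t).reverse).prod = t i * P := by
    have h1 : List.range' 1 i = List.range' 1 (i - 1) ++ [i] := by
      have := List.range'_append_1 (s := 1) (m := i - 1) (n := 1)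
      rw [show 1 + (i - 1) = i by omega, show i - 1 + 1 = i by omega] at this
      rw [← this]
      rfl
    rw [h1]
    simp [List.reverse_append, List.prod_append, P]
  refine ⟨hPax, hPby, ?_, ?_⟩
  · rw [hpi, Equiv.Perm.mul_apply, hPax, hti, Equiv.swap_apply_left]
  · rw [hpi, Equiv.Perm.mul_apply, hPby, hti, Equiv.swap_apply_right]
end

section
/- Let a ≠ b be elements of {1,…,n} and let τ = t_m, …, t_1 be a transposition decomposition of the transposition swapping a and b. Then there is at most one index i ∈ {1,…,m} such that t_i is an a,b-cut edge of τ. -/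
private def pp {n : ℕ} (t : ℕ → Equiv.Perm (Fin n)) (k : ℕ) : Equiv.Perm (Fin n) :=
  (((List.range' 1 k).map t).reverse).prod

private lemma pp_zero {n : ℕ} (t : ℕ → Equiv.Perm (Fin n)) : pp t 0 = 1 := by
  simp [pp]

private lemma pp_succ {n : ℕ} (t : ℕ → Equiv.Perm (Fin n)) (k : ℕ) :
    pp t (k + 1) = t (k + 1) * pp t k := by
  unfold pp
  rw [List.range'_1_concat, List.map_append, List.reverse_append]
  simp [Nat.add_comm 1 k]

private def Gr {n : ℕ} (m : ℕ) (t : ℕ → Equiv.Perm (Fin n)) (i₀ : ℕ) : SimpleGraph (Fin n) :=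
  SimpleGraph.fromRel fun u v => ∃ j, 1 ≤ j ∧ j ≤ m ∧ j ≠ i₀ ∧ t j = Equiv.swap u v

private lemma mem_step {n m : ℕ} {a : Fin n} {t : ℕ → Equiv.Perm (Fin n)}
    (htrans : ∀ j, 1 ≤ j → j ≤ m → ∃ x y : Fin n, x ≠ y ∧ t j = Equiv.swap x y)
    (i₀ j : ℕ) (hj1 : 1 ≤ j) (hjm : j ≤ m) (hji : j ≠ i₀) (z : Fin n) :
    (Gr m t i₀).Reachable a (t j z) ↔ (Gr m t i₀).Reachable a z := by
  obtain ⟨x, y, hxy, hts⟩ := htrans j hj1 hjm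
  have hadj : (Gr m t i₀).Adj x y := by
    rw [Gr, SimpleGraph.fromRel_adj]
    exact ⟨hxy, Or.inl ⟨j, hj1, hjm, hji, hts⟩⟩
  rw [hts]
  rcases eq_or_ne z x with rfl | hzx
  · rw [Equiv.swap_apply_left]
    exact ⟨fun h => h.trans hadj.symm.reachable, fun h => h.trans hadj.reachable⟩
  rcases eq_or_ne z y with rfl | hzy
  · rw [Equiv.swap_apply_right]
    exact ⟨fun h => h.trans hadj.reachable, fun h => h.trans hadj.symm.reachable⟩
  · rw [Equiv.swap_apply_of_ne_of_ne hzx hzy]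

private lemma mem_const {n m : ℕ} {a : Fin n} {t : ℕ → Equiv.Perm (Fin n)}
    (htrans : ∀ j, 1 ≤ j → j ≤ m → ∃ x y : Fin n, x ≠ y ∧ t j = Equiv.swap x y)
    (i₀ : ℕ) (c : Fin n) :
    ∀ k, k ≤ m → k < i₀ →
      ((Gr m t i₀).Reachable a (pp t k c) ↔ (Gr m t i₀).Reachable a c) := by
  intro k
  induction k with
  | zero => intro _ _; rw [pp_zero]; simp
  | succ k ih =>
    intro hkm hki
    rw [pp_succ, Equiv.Perm.mul_apply,
      mem_step htrans i₀ (k + 1) (Nat.le_add_left 1 k) hkm (Nat.ne_of_lt hki)]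
    exact ih (Nat.le_of_succ_le hkm) (Nat.lt_of_succ_lt hki)

private lemma mem_constAbove {n m : ℕ} {a : Fin n} {t : ℕ → Equiv.Perm (Fin n)}
    (htrans : ∀ j, 1 ≤ j → j ≤ m → ∃ x y : Fin n, x ≠ y ∧ t j = Equiv.swap x y)
    (i₀ : ℕ) (c : Fin n) :
    ∀ k, i₀ ≤ k → k ≤ m →
      ((Gr m t i₀).Reachable a (pp t k c) ↔ (Gr m t i₀).Reachable a (pp t i₀ c)) := by
  intro k hk
  induction k, hk using Nat.le_induction with
  | base => intro _; rfl
  | succ k hik ih =>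
    intro hkm
    rw [pp_succ, Equiv.Perm.mul_apply,
      mem_step htrans i₀ (k + 1) (Nat.le_add_left 1 k) hkm
        (Nat.ne_of_gt (Nat.lt_succ_of_le hik))]
    exact ih (Nat.le_of_succ_le hkm)

private lemma aux {n : ℕ} (a b : Fin n) (m : ℕ) (t : ℕ → Equiv.Perm (Fin n))
    (htrans : ∀ j, 1 ≤ j → j ≤ m → ∃ x y : Fin n, x ≠ y ∧ t j = Equiv.swap x y)
    (hprod : (((List.range' 1 m).map t).reverse).prod = Equiv.swap a b)
    (i i' : ℕ) (hi1 : 1 ≤ i) (hi'm : i' ≤ m) (hii' : i < i')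
    (hcut : ¬ (Gr m t i).Reachable a b)
    (hcut' : ¬ (Gr m t i').Reachable a b) : False := by
  have him : i ≤ m := le_trans (le_of_lt hii') hi'm
  have hppm : pp t m = Equiv.swap a b := hprod
  obtain ⟨u, v, huv, hti⟩ := htrans i hi1 him
  have hieq : i - 1 + 1 = i := Nat.succ_pred_eq_of_pos hi1
  have hstep : pp t i = t i * pp t (i - 1) := by
    have h := pp_succ t (i - 1); rwa [hieq] at h
  have hi1m : i - 1 ≤ m := le_trans (Nat.sub_le i 1) him
  have hi1i : i - 1 < i := Nat.sub_lt hi1 one_pos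
  have hppma : pp t m a = b := by rw [hppm, Equiv.swap_apply_left]
  have hppmb : pp t m b = a := by rw [hppm, Equiv.swap_apply_right]
  -- membership w.r.t. cut i
  have hA_qa : (Gr m t i).Reachable a (pp t (i - 1) a) :=
    (mem_const htrans i a (i - 1) hi1m hi1i).mpr (SimpleGraph.Reachable.refl a)
  have hA_pia : ¬ (Gr m t i).Reachable a (pp t i a) := by
    intro h
    have h2 := (mem_constAbove htrans i a m him le_rfl).mpr h
    rw [hppma] at h2
    exact hcut h2
  have hA_qb : ¬ (Gr m t i).Reachable a (pp t (i - 1) b) := by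
    intro h
    exact hcut ((mem_const htrans i b (i - 1) hi1m hi1i).mp h)
  have hA_pib : (Gr m t i).Reachable a (pp t i b) := by
    have h : (Gr m t i).Reachable a (pp t m b) := by
      rw [hppmb]
    exact (mem_constAbove htrans i b m him le_rfl).mp h
  -- the i-th step moves both trajectories, so they sit at {u, v}
  have hpia : pp t i a = t i (pp t (i - 1) a) := by rw [hstep]; rfl
  have hpib : pp t i b = t i (pp t (i - 1) b) := by rw [hstep]; rfl
  have hauv : pp t (i - 1) a = u ∨ pp t (i - 1) a = v := by
    by_contra h
    push_neg at h
    have : t i (pp t (i - 1) a) = pp t (i - 1) a := by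
      rw [hti, Equiv.swap_apply_of_ne_of_ne h.1 h.2]
    rw [hpia, this] at hA_pia
    exact hA_pia hA_qa
  have hbuv : pp t (i - 1) b = u ∨ pp t (i - 1) b = v := by
    by_contra h
    push_neg at h
    have : t i (pp t (i - 1) b) = pp t (i - 1) b := by
      rw [hti, Equiv.swap_apply_of_ne_of_ne h.1 h.2]
    rw [hpib, this] at hA_pib
    exact hA_qb hA_pib
  have htiu : t i u = v := by rw [hti, Equiv.swap_apply_left]
  have htiv : t i v = u := by rw [hti, Equiv.swap_apply_right]
  -- membership w.r.t. cut i' : steps i-1 and i are both below i'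
  have hi1i' : i - 1 < i' := lt_trans hi1i hii'
  have hA'_qa : (Gr m t i').Reachable a (pp t (i - 1) a) :=
    (mem_const htrans i' a (i - 1) hi1m hi1i').mpr (SimpleGraph.Reachable.refl a)
  have hA'_pia : (Gr m t i').Reachable a (pp t i a) :=
    (mem_const htrans i' a i him hii').mpr (SimpleGraph.Reachable.refl a)
  have hA'_qb : ¬ (Gr m t i').Reachable a (pp t (i - 1) b) := by
    intro h
    exact hcut' ((mem_const htrans i' b (i - 1) hi1m hi1i').mp h)
  have hA'_pib : ¬ (Gr m t i').Reachable a (pp t i b) := by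
    intro h
    exact hcut' ((mem_const htrans i' b i him hii').mp h)
  -- derive that both u and v are reachable (from a's trajectory)
  have hRu : (Gr m t i').Reachable a u ∧ (Gr m t i').Reachable a v := by
    rcases hauv with h | h
    · constructor
      · rwa [h] at hA'_qa
      · have := hA'_pia; rw [hpia, h, htiu] at this; exact this
    · constructor
      · have := hA'_pia; rw [hpia, h, htiv] at this; exact this
      · rwa [h] at hA'_qa
  -- and both not reachable (from b's trajectory)
  rcases hbuv with h | h
  · exact hA'_qb (by rw [h]; exact hRu.1)
  · exact hA'_qb (by rw [h]; exact hRu.2)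

/-- Let `a ≠ b` and let `t_m, …, t_1` (here `t j` for `1 ≤ j ≤ m`) be a
transposition decomposition of `swap a b`.  Then there is at most one index
`i ∈ {1,…,m}` such that `t i` is an `a,b`-cut edge, i.e. such that `a` and `b` are not
connected in the simple graph whose edges are the pairs swapped by the `t j`, `j ≠ i`. -/
theorem stmt3 {n : ℕ} (a b : Fin n) (hab : a ≠ b) (m : ℕ)
    (t : ℕ → Equiv.Perm (Fin n))
    (htrans : ∀ j, 1 ≤ j → j ≤ m → ∃ x y : Fin n, x ≠ y ∧ t j = Equiv.swap x y)
    (hprod : (((List.range' 1 m).map t).reverse).prod = Equiv.swap a b)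
    (i i' : ℕ) (hi1 : 1 ≤ i) (him : i ≤ m) (hi'1 : 1 ≤ i') (hi'm : i' ≤ m)
    (hcut : ¬ (SimpleGraph.fromRel fun u v =>
      ∃ j, 1 ≤ j ∧ j ≤ m ∧ j ≠ i ∧ t j = Equiv.swap u v).Reachable a b)
    (hcut' : ¬ (SimpleGraph.fromRel fun u v =>
      ∃ j, 1 ≤ j ∧ j ≤ m ∧ j ≠ i' ∧ t j = Equiv.swap u v).Reachable a b) :
    i = i' := by
  by_contra hne
  rcases Nat.lt_or_ge i i' with h | h
  · exact aux a b m t htrans hprod i i' hi1 hi'm h hcut hcut'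
  · exact aux a b m t htrans hprod i' i hi'1 him
      (lt_of_le_of_ne h (Ne.symm hne)) hcut' hcut
end

section
/- For all distinct a, b ∈ {1,…,n} and every path p from a to b, the minimum decomposition cost of the transposition swapping a and b is at most the transposition path cost of p: M_φ(swap(a,b)) ≤ φ̄(p). -/
variable {n : ℕ}

/-- The minimum `φ`-cost over all transposition decompositions of `π`
(a transposition decomposition is a list of pairs `(aᵢ, bᵢ)` of distinct elements
whose associated swaps multiply to `π`; its cost is `Σ φ(aᵢ, bᵢ)`). -/
noncomputable def Mcost (φ : Fin n → Fin n → ℝ) (π : Equiv.Perm (Fin n)) : ℝ :=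
  sInf {c : ℝ | ∃ l : List (Fin n × Fin n), (∀ p ∈ l, p.1 ≠ p.2) ∧
    (l.map fun p => Equiv.swap p.1 p.2).prod = π ∧
    (l.map fun p => φ p.1 p.2).sum = c}

/-- `p` is a path from `a` to `b`: a list of pairwise distinct elements starting
at `a` and ending at `b`. -/
def IsPathList (p : List (Fin n)) (a b : Fin n) : Prop :=
  p.Nodup ∧ p.head? = some a ∧ p.getLast? = some b

/-- The cost of a path: the sum of `φ` over consecutive pairs. -/
noncomputable def pathCost (φ : Fin n → Fin n → ℝ) (p : List (Fin n)) : ℝ :=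
  ((p.zip p.tail).map fun q => φ q.1 q.2).sum

/-- The transposition path cost `φ̄(p) = 2 Σ_j φ(c_j, c_{j+1}) − max_j φ(c_j, c_{j+1})`. -/
noncomputable def tpCost (φ : Fin n → Fin n → ℝ) (p : List (Fin n)) : ℝ :=
  2 * pathCost φ p - sSup {x : ℝ | ∃ q ∈ p.zip p.tail, φ q.1 q.2 = x}

lemma zip_ne {p : List (Fin n)} (h : p.Nodup) : ∀ q ∈ p.zip p.tail, q.1 ≠ q.2 := by
  induction p with
  | nil => simp
  | cons x t ih =>
    cases t with
    | nil => simp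
    | cons y s =>
      intro q hq
      rcases List.mem_cons.1 hq with h1 | h1
      · subst h1; simp at h ⊢; intro hxy; exact h.1.1 hxy
      · exact ih (List.nodup_cons.1 h).2 q h1

lemma chainW {q : List (Fin n)} (hq : q.Nodup) {x y : Fin n}
    (hx : q.head? = some x) (hy : q.getLast? = some y) :
    ((q.zip q.tail).map fun e => Equiv.swap e.1 e.2).prod y = x ∧
      ∀ z ∉ q, ((q.zip q.tail).map fun e => Equiv.swap e.1 e.2).prod z = z := by
  induction q generalizing x y with
  | nil => simp at hx
  | cons d t ih =>
    cases t with
    | nil =>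
      simp at hx hy; subst hx; subst hy; simp
    | cons d1 r =>
      obtain ⟨h1, h2⟩ := List.nodup_cons.1 hq
      have hy' : (d1 :: r).getLast? = some y := by
        rwa [List.getLast?_cons_cons] at hy
      obtain ⟨IH1, IH2⟩ := ih h2 (x := d1) rfl hy'
      simp only [List.head?_cons, Option.some.injEq] at hx
      subst hx
      simp only [List.tail_cons] at IH1 IH2
      constructor
      · simp only [List.tail_cons, List.zip_cons_cons, List.map_cons, List.prod_cons,
          Equiv.Perm.mul_apply]
        rw [IH1, Equiv.swap_apply_right]
      · intro z hz
        simp only [List.mem_cons, not_or] at hz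
        simp only [List.tail_cons, List.zip_cons_cons, List.map_cons, List.prod_cons,
          Equiv.Perm.mul_apply]
        rw [IH2 z (by simp [hz.2]), Equiv.swap_apply_of_ne_of_ne hz.1 hz.2.1]
lemma revprod (l : List (Fin n × Fin n)) :
    ((l.reverse.map fun q => Equiv.swap q.1 q.2).prod) =
      ((l.map fun q => Equiv.swap q.1 q.2).prod)⁻¹ := by
  rw [List.map_reverse, List.prod_reverse_noncomm, List.map_map]
  congr 1

lemma key_s4 (φ : Fin n → Fin n → ℝ) (p : List (Fin n)) (hnd : p.Nodup) (a b : Fin n)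
    (ha : p.head? = some a) (hb : p.getLast? = some b) (e : Fin n × Fin n)
    (he : e ∈ p.zip p.tail) :
    ∃ l : List (Fin n × Fin n), (∀ q ∈ l, q.1 ≠ q.2) ∧
      (l.map fun q => Equiv.swap q.1 q.2).prod = Equiv.swap a b ∧
      (l.map fun q => φ q.1 q.2).sum = 2 * pathCost φ p - φ e.1 e.2 := by
  induction p generalizing a b e with
  | nil => simp at ha
  | cons x t ih =>
    simp only [List.head?_cons, Option.some.injEq] at ha
    subst ha
    cases t with
    | nil => simp at he
    | cons c r =>
      obtain ⟨hx1, hx2⟩ := List.nodup_cons.1 hnd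
      have hb' : (c :: r).getLast? = some b := by rwa [List.getLast?_cons_cons] at hb
      have hxc : x ≠ c := fun h => hx1 (h ▸ (List.mem_cons_self : c ∈ c :: r))
      simp only [List.tail_cons, List.zip_cons_cons, List.mem_cons] at he
      have hsplit : pathCost φ (x :: c :: r) = φ x c + pathCost φ (c :: r) := by
        simp [pathCost]
      rcases he with he | he
      · -- e = (x, c) : conjugate by the chain along the tail
        subst he
        set wl := (c :: r).zip ((c :: r).tail) with hwl
        set W := (wl.map fun q => Equiv.swap q.1 q.2).prod with hW
        obtain ⟨hW1, hW2⟩ := chainW hx2 rfl hb'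
        refine ⟨wl.reverse ++ [(x, c)] ++ wl, ?_, ?_, ?_⟩
        · intro q hq
          simp only [List.mem_append, List.mem_reverse, List.mem_singleton] at hq
          rcases hq with (hq | hq) | hq
          · exact zip_ne hx2 q hq
          · subst hq; exact hxc
          · exact zip_ne hx2 q hq
        · rw [List.map_append, List.map_append, List.prod_append, List.prod_append,
            revprod]
          show W⁻¹ * _ * W = _
          simp only [List.map_singleton, List.prod_singleton]
          have hWx : W x = x := hW2 x hx1
          have hW1' : W b = c := hW1
          have hWinvx : W⁻¹ x = x := Equiv.Perm.inv_eq_iff_eq.2 hWx.symm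
          have hWinvc : W⁻¹ c = b := Equiv.Perm.inv_eq_iff_eq.2 hW1'.symm
          have := Equiv.swap_apply_apply W⁻¹ x c
          rw [hWinvx, hWinvc] at this
          rw [this, inv_inv]
        · simp only [List.map_append, List.sum_append, List.map_reverse, List.sum_reverse,
            List.map_singleton, List.sum_singleton]
          have : (wl.map fun q => φ q.1 q.2).sum = pathCost φ (c :: r) := rfl
          rw [this, hsplit]
          ring
      · -- e in the tail path: recurse
        have hrne : r ≠ [] := by
          rintro rfl; simp at he
        have hbr : b ∈ r := by
          obtain ⟨r0, s, rfl⟩ := List.exists_cons_of_ne_nil hrne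
          rw [List.getLast?_cons_cons] at hb'
          exact List.mem_of_mem_getLast? hb'
        have hbc : c ≠ b := fun h => (List.nodup_cons.1 hx2).1 (h ▸ hbr)
        have hbx : b ≠ x := fun h => hx1 (h ▸ List.mem_cons_of_mem c hbr)
        obtain ⟨l', hl1, hl2, hl3⟩ := ih hx2 c b rfl hb' e he
        refine ⟨(x, c) :: l' ++ [(x, c)], ?_, ?_, ?_⟩
        · intro q hq
          simp only [List.cons_append, List.mem_cons, List.mem_append,
            List.mem_singleton] at hq
          rcases hq with hq | hq | hq | hq
          · subst hq; exact hxc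
          · exact hl1 q hq
          · subst hq; exact hxc
          · simp at hq
        · simp only [List.cons_append, List.map_cons, List.map_append, List.prod_cons,
            List.prod_append, List.map_singleton, List.prod_singleton, hl2]
          have := Equiv.swap_apply_apply (Equiv.swap x c) c b
          rw [Equiv.swap_apply_right, Equiv.swap_apply_of_ne_of_ne hbx hbc.symm] at this
          rw [this]
          simp [mul_assoc, Equiv.swap_inv]
        · simp only [List.cons_append, List.map_cons, List.map_append, List.sum_cons,
            List.sum_append, List.map_singleton, List.sum_singleton, List.map_nil,
            List.sum_nil, hl3, hsplit]
          ring

/-- for distinct `a, b` and every path `p` from `a` to `b`,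
`M_φ(swap a b) ≤ φ̄(p)`. -/
theorem stmt4 (φ : Fin n → Fin n → ℝ)
    (hnn : ∀ a b : Fin n, a ≠ b → 0 ≤ φ a b)
    (hsym : ∀ a b : Fin n, φ a b = φ b a)
    (a b : Fin n) (hab : a ≠ b)
    (p : List (Fin n)) (hp : IsPathList p a b) :
    Mcost φ (Equiv.swap a b) ≤ tpCost φ p := by
  obtain ⟨hnd, ha, hb⟩ := hp
  have hbdd : BddBelow {c : ℝ | ∃ l : List (Fin n × Fin n), (∀ q ∈ l, q.1 ≠ q.2) ∧
      (l.map fun q => Equiv.swap q.1 q.2).prod = Equiv.swap a b ∧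
      (l.map fun q => φ q.1 q.2).sum = c} := by
    refine ⟨0, fun c hc => ?_⟩
    obtain ⟨l, hl1, -, hl3⟩ := hc
    rw [← hl3]
    apply List.sum_nonneg
    intro v hv
    obtain ⟨q, hq, rfl⟩ := List.mem_map.1 hv
    exact hnn q.1 q.2 (hl1 q hq)
  have hzne : ∃ q0, q0 ∈ p.zip p.tail := by
    cases p with
    | nil => simp at ha
    | cons x t =>
      cases t with
      | nil =>
        simp only [List.head?_cons, Option.some.injEq] at ha
        simp only [List.getLast?_singleton, Option.some.injEq] at hb
        exact absurd (ha.symm.trans hb) hab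
      | cons y r => exact ⟨(x, y), by simp⟩
  obtain ⟨q0, hq0⟩ := hzne
  set S : Set ℝ := {v : ℝ | ∃ q ∈ p.zip p.tail, φ q.1 q.2 = v} with hS
  have hSfin : S.Finite := by
    have : S = (fun q : Fin n × Fin n => φ q.1 q.2) '' {q | q ∈ p.zip p.tail} := by
      ext v; simp [hS, Set.mem_image]
    rw [this]
    exact ((p.zip p.tail).finite_toSet).image _
  have hSne : S.Nonempty := ⟨φ q0.1 q0.2, q0, hq0, rfl⟩
  obtain ⟨e, heL, heq⟩ := hSne.csSup_mem hSfin
  obtain ⟨l, hl1, hl2, hl3⟩ := key_s4 φ p hnd a b ha hb e heL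
  apply csInf_le hbdd
  exact ⟨l, hl1, hl2, by simp only [tpCost]; rw [hl3, heq]⟩
end

section
/- For all distinct a, b ∈ {1,…,n}, the minimum decomposition cost of the transposition swapping a and b equals the minimum transposition path cost over all paths from a to b: M_φ(swap(a,b)) = min_p φ̄(p), the minimum taken over all paths p from a to b. -/
variable {n : ℕ}

set_option linter.unusedSectionVars false
namespace Stmt5Aux

variable {α : Type*}

/-- consecutive pairs of a list -/
def eL : List α → List (α × α)
  | a :: b :: t => (a, b) :: eL (b :: t)
  | _ => []

@[simp] lemma eL_nil : eL ([] : List α) = [] := rfl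
@[simp] lemma eL_single (a : α) : eL [a] = [] := rfl
@[simp] lemma eL_cons_cons (a b : α) (t : List α) :
    eL (a :: b :: t) = (a, b) :: eL (b :: t) := rfl

lemma zip_tail_eq_eL : ∀ l : List α, l.zip l.tail = eL l
  | [] => rfl
  | [_] => rfl
  | a :: b :: t => by
      have := zip_tail_eq_eL (b :: t)
      simpa [eL] using this

lemma eL_append_cons : ∀ (u : List α) (x : α) (v : List α),
    eL (u ++ x :: v) = eL (u ++ [x]) ++ eL (x :: v)
  | [], x, v => by simp
  | [a], x, v => by simp
  | a :: c :: u, x, v => by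
      have := eL_append_cons (c :: u) x v
      simpa [eL] using this

lemma eL_concat : ∀ (w : List α) (_ : w ≠ []) (y : α),
    eL (w ++ [y]) = eL w ++ [((w.getLast (by assumption)), y)]
  | [a], _, y => by simp
  | a :: c :: u, _, y => by
      have := eL_concat (c :: u) (by simp) y
      simpa [eL] using this

lemma eL_reverse : ∀ l : List α, eL l.reverse = (eL l).reverse.map Prod.swap
  | [] => rfl
  | [_] => rfl
  | a :: b :: t => by
      have ih := eL_reverse (b :: t)
      have hne : (b :: t).reverse ≠ [] := by simp
      have hlast : (b :: t).reverse.getLast hne = b := by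
        simp [List.getLast_reverse]
      have h1 : (a :: b :: t).reverse = (b :: t).reverse ++ [a] := by simp
      rw [h1, eL_concat _ hne a, hlast, ih, eL_cons_cons]
      simp

lemma mem_eL_split : ∀ (l : List α) (e : α × α), e ∈ eL l →
    ∃ u v, l = u ++ e.1 :: e.2 :: v
  | a :: b :: t, e, he => by
      rcases (by simpa [eL] using he : e = (a, b) ∨ e ∈ eL (b :: t)) with h | h
      · exact ⟨[], t, by simp [h]⟩
      · obtain ⟨u, v, huv⟩ := mem_eL_split (b :: t) e h
        exact ⟨a :: u, v, by simp [huv]⟩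

lemma not_nodup_split {l : List α} (h : ¬ l.Nodup) :
    ∃ (x : α) (u v w : List α), l = u ++ x :: v ++ x :: w := by
  induction l with
  | nil => simp at h
  | cons a t ih =>
      by_cases ha : a ∈ t
      · obtain ⟨v, w, hvw⟩ := List.append_of_mem ha
        exact ⟨a, [], v, w, by simp [hvw]⟩
      · have : ¬ t.Nodup := fun hn => h (List.nodup_cons.mpr ⟨ha, hn⟩)
        obtain ⟨x, u, v, w, huv⟩ := ih this
        exact ⟨x, a :: u, v, w, by simp [huv]⟩


/-! ### edge value multisets and walks -/

variable (φ : α → α → ℝ)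

def vals (l : List α) : Multiset ℝ := (((eL l).map fun e => φ e.1 e.2 : List ℝ) : Multiset ℝ)

@[simp] lemma vals_nil : vals φ ([] : List α) = 0 := rfl
@[simp] lemma vals_single (a : α) : vals φ [a] = 0 := rfl
@[simp] lemma vals_cons_cons (a b : α) (t : List α) :
    vals φ (a :: b :: t) = φ a b ::ₘ vals φ (b :: t) := rfl

lemma vals_sum_eq_pathSum (l : List α) :
    (vals φ l).sum = ((l.zip l.tail).map fun q => φ q.1 q.2).sum := by
  rw [zip_tail_eq_eL]
  simp [vals]

lemma vals_append_cons (u : List α) (x : α) (v : List α) :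
    vals φ (u ++ x :: v) = vals φ (u ++ [x]) + vals φ (x :: v) := by
  simp [vals, eL_append_cons u x v]

lemma vals_concat (w : List α) (h : w ≠ []) (y : α) :
    vals φ (w ++ [y]) = vals φ w + {φ (w.getLast h) y} := by
  simp only [vals, eL_concat w h y, List.map_append]
  rfl

lemma vals_reverse (hsym : ∀ a b : α, φ a b = φ b a) (l : List α) :
    vals φ l.reverse = vals φ l := by
  simp only [vals, eL_reverse]
  rw [List.map_map]
  have : ((fun e : α × α => φ e.1 e.2) ∘ Prod.swap) = fun e : α × α => φ e.1 e.2 := by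
    funext e; exact (hsym e.2 e.1)
  rw [this]
  simp [Multiset.coe_reverse]

lemma mem_eL_ne {l : List α} (hc : l.Chain' (· ≠ ·)) {e : α × α} (he : e ∈ eL l) :
    e.1 ≠ e.2 := by
  obtain ⟨u, v, huv⟩ := mem_eL_split l e he
  subst huv
  exact (List.isChain_cons_cons.mp (List.isChain_append.mp hc).2.1).1

lemma vals_nonneg (hnn : ∀ a b : α, a ≠ b → 0 ≤ φ a b)
    {l : List α} (hc : l.Chain' (· ≠ ·)) : ∀ x ∈ vals φ l, 0 ≤ x := by
  intro x hx
  simp only [vals, Multiset.mem_coe, List.mem_map] at hx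
  obtain ⟨e, he, rfl⟩ := hx
  exact hnn _ _ (mem_eL_ne hc he)

lemma sum_le_sum_of_le {s t : Multiset ℝ} (h : s ≤ t) (ht : ∀ x ∈ t, 0 ≤ x) :
    s.sum ≤ t.sum := by
  obtain ⟨u, rfl⟩ := Multiset.le_iff_exists_add.mp h
  have : 0 ≤ u.sum := Multiset.sum_nonneg fun x hx => ht x (by simp [hx])
  simp [Multiset.sum_add]
  linarith

lemma getLast?_append_ne_nil (u : List α) {t : List α} (h : t ≠ []) :
    (u ++ t).getLast? = t.getLast? := by
  rw [List.getLast?_append, Option.or_of_isSome (by simp [List.getLast?_isSome, h])]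

lemma mem_of_getLast? {l : List α} {a : α} (h : l.getLast? = some a) : a ∈ l := by
  have hne : l ≠ [] := by rintro rfl; simp at h
  have h2 := List.getLast?_eq_getLast hne
  rw [h2, Option.some_inj] at h
  rw [← h]; exact List.getLast_mem hne

def IsWalk (w : List α) (x y : α) : Prop :=
  w.Chain' (· ≠ ·) ∧ w.head? = some x ∧ w.getLast? = some y

lemma isWalk_single (x : α) : IsWalk [x] x x := ⟨List.isChain_singleton x, rfl, rfl⟩

lemma IsWalk.ne_nil {w : List α} {x y : α} (h : IsWalk w x y) : w ≠ [] := by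
  rintro rfl; simp [IsWalk] at h

lemma IsWalk.getLast_eq {w : List α} {x y : α} (h : IsWalk w x y) :
    w.getLast h.ne_nil = y := by
  have := h.2.2
  rwa [List.getLast?_eq_getLast h.ne_nil, Option.some_inj] at this

lemma IsWalk.concat {w : List α} {x y : α} (h : IsWalk w x y) {z : α} (hz : y ≠ z) :
    IsWalk (w ++ [z]) x z ∧ vals φ (w ++ [z]) = vals φ w + {φ y z} := by
  have hne := h.ne_nil
  constructor
  · refine ⟨?_, ?_, ?_⟩
    · unfold List.Chain'
      rw [List.isChain_append]
      refine ⟨h.1, List.isChain_singleton z, ?_⟩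
      intro u hu v hv
      rw [h.2.2] at hu
      simp at hu hv
      exact hu ▸ hv ▸ hz
    · rw [List.head?_append, h.2.1]; rfl
    · simp
  · rw [vals_concat φ w hne z, h.getLast_eq]

lemma IsWalk.reverse {w : List α} {x y : α} (h : IsWalk w x y) : IsWalk w.reverse y x := by
  refine ⟨?_, ?_, ?_⟩
  · unfold List.Chain'
    rw [List.isChain_reverse]
    exact List.IsChain.imp (fun _ _ hab => hab.symm) h.1
  · rw [List.head?_reverse]; exact h.2.2
  · rw [List.getLast?_reverse]; exact h.2.1

lemma extract_aux (N : ℕ) : ∀ (w : List α), w.length ≤ N → w.Chain' (· ≠ ·) →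
    ∃ p : List α, p.Nodup ∧ p.head? = w.head? ∧ p.getLast? = w.getLast? ∧
      p.Chain' (· ≠ ·) ∧ vals φ p ≤ vals φ w := by
  induction N with
  | zero =>
      intro w hw _
      have : w = [] := List.length_eq_zero_iff.mp (Nat.le_zero.mp hw)
      subst this
      exact ⟨[], by simp; exact List.IsChain.nil⟩
  | succ N ih =>
      intro w hw hc
      by_cases hnd : w.Nodup
      · exact ⟨w, hnd, rfl, rfl, hc, le_rfl⟩
      · obtain ⟨x, u, v, t, rfl⟩ := not_nodup_split hnd
        have hc' : ((u ++ [x]) ++ (v ++ x :: t)).Chain' (· ≠ ·) := by simpa using hc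
        obtain ⟨hcA, hcRest, _⟩ := List.isChain_append.mp hc'
        obtain ⟨hcv, hcxt, _⟩ :=
          List.isChain_append.mp (show (v ++ (x :: t)).Chain' (· ≠ ·) from hcRest)
        obtain ⟨hcu, _, hux⟩ := List.isChain_append.mp hcA
        have hnew : (u ++ x :: t).Chain' (· ≠ ·) := by
          refine List.isChain_append.mpr ⟨hcu, hcxt, ?_⟩
          intro a ha c hcc
          simp only [List.head?_cons, Option.mem_some_iff] at hcc
          subst hcc
          exact hux a ha x (by simp)
        have hlen : (u ++ x :: t).length ≤ N := by
          simp only [List.length_append, List.length_cons] at hw ⊢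
          omega
        obtain ⟨p, hp1, hp2, hp3, hp4, hp5⟩ := ih (u ++ x :: t) hlen hnew
        refine ⟨p, hp1, ?_, ?_, hp4, ?_⟩
        · rw [hp2]
          simp [List.head?_append]
        · rw [hp3, getLast?_append_ne_nil u (by simp : (x :: t : List α) ≠ []),
            getLast?_append_ne_nil (u ++ x :: v) (by simp : (x :: t : List α) ≠ [])]
        · refine le_trans hp5 ?_
          rw [vals_append_cons φ u x t, vals_append_cons φ (u ++ x :: v) x t,
            show ((u ++ x :: v) ++ [x] : List α) = u ++ x :: (v ++ [x]) from by simp,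
            vals_append_cons φ u x (v ++ [x])]
          exact add_le_add (self_le_add_right _ _) le_rfl

/-! ### products of swaps -/

section Perm
variable [DecidableEq α]

def prodSwaps (l : List (α × α)) : Equiv.Perm α := (l.map fun e => Equiv.swap e.1 e.2).prod

def cost (l : List (α × α)) : ℝ := (l.map fun e => φ e.1 e.2).sum

@[simp] lemma prodSwaps_nil : prodSwaps ([] : List (α × α)) = 1 := rfl
@[simp] lemma prodSwaps_cons (e : α × α) (l : List (α × α)) :
    prodSwaps (e :: l) = Equiv.swap e.1 e.2 * prodSwaps l := by
  simp [prodSwaps]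

lemma prodSwaps_append (l₁ l₂ : List (α × α)) :
    prodSwaps (l₁ ++ l₂) = prodSwaps l₁ * prodSwaps l₂ := by
  simp [prodSwaps]

lemma prodSwaps_reverse (l : List (α × α)) :
    prodSwaps l.reverse = (prodSwaps l)⁻¹ := by
  induction l with
  | nil => simp
  | cons e t ih =>
      rw [List.reverse_cons, prodSwaps_append, ih, prodSwaps_cons]
      simp [mul_inv_rev, Equiv.swap_inv]

@[simp] lemma cost_nil : cost φ ([] : List (α × α)) = 0 := rfl
@[simp] lemma cost_cons (e : α × α) (l : List (α × α)) :
    cost φ (e :: l) = φ e.1 e.2 + cost φ l := by simp [cost]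

lemma cost_append (l₁ l₂ : List (α × α)) :
    cost φ (l₁ ++ l₂) = cost φ l₁ + cost φ l₂ := by simp [cost]

lemma cost_nonneg (hnn : ∀ a b : α, a ≠ b → 0 ≤ φ a b) (l : List (α × α))
    (hl : ∀ e ∈ l, e.1 ≠ e.2) : 0 ≤ cost φ l := by
  apply List.sum_nonneg
  intro x hx
  simp only [List.mem_map] at hx
  obtain ⟨e, he, rfl⟩ := hx
  exact hnn _ _ (hl e he)

lemma cost_eL_eq (l : List α) : cost φ (eL l) = (vals φ l).sum := by
  simp [cost, vals]

lemma prodSwaps_eL_getLast : ∀ (l : List α) (h : l ≠ []),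
    prodSwaps (eL l) (l.getLast h) = l.head h
  | [a], _ => by simp
  | a :: b :: t, _ => by
      have ih := prodSwaps_eL_getLast (b :: t) (by simp)
      simp only [eL_cons_cons, prodSwaps_cons, Equiv.Perm.mul_apply]
      rw [List.getLast_cons (by simp : (b :: t : List α) ≠ [])]
      rw [ih]
      simp [Equiv.swap_apply_right]

lemma prodSwaps_eL_fix : ∀ (l : List α) (z : α), z ∉ l → prodSwaps (eL l) z = z
  | [], _, _ => rfl
  | [a], _, _ => rfl
  | a :: b :: t, z, hz => by
      have hza : z ≠ a := fun h => hz (h ▸ List.mem_cons_self)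
      have hzb : z ≠ b := fun h => hz (by simp [h])
      have ih := prodSwaps_eL_fix (b :: t) z (fun h => hz (List.mem_cons_of_mem _ h))
      simp only [eL_cons_cons, prodSwaps_cons, Equiv.Perm.mul_apply, ih]
      exact Equiv.swap_apply_of_ne_of_ne hza hzb

/-! ### the key invariant -/

theorem invariant (hnn : ∀ a b : α, a ≠ b → 0 ≤ φ a b) (hsym : ∀ a b : α, φ a b = φ b a) :
    ∀ (l : List (α × α)), (∀ e ∈ l, e.1 ≠ e.2) → ∀ p q : α, p ≠ q →
    (∃ w₁ w₂ : List α, IsWalk w₁ p (prodSwaps l p) ∧ IsWalk w₂ q (prodSwaps l q) ∧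
        (vals φ w₁).sum + (vals φ w₂).sum ≤ cost φ l)
    ∨ (∃ (u v : α) (w₁ w₂ : List α), u ≠ v ∧
        IsWalk w₁ p (prodSwaps l q) ∧ IsWalk w₂ q (prodSwaps l p) ∧
        u ∈ w₁ ∧ v ∈ w₂ ∧
        (vals φ w₁).sum + (vals φ w₂).sum + φ u v ≤ cost φ l) := by
  intro l
  induction l with
  | nil =>
      intro _ p q hpq
      exact Or.inl ⟨[p], [q], by simpa using isWalk_single p, by simpa using isWalk_single q,
        by simp⟩
  | cons e l ih =>
      intro hl p q hpq
      obtain ⟨x, y⟩ := e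
      have hxy : x ≠ y := hl (x, y) (List.mem_cons_self)
      have hl' : ∀ e ∈ l, e.1 ≠ e.2 := fun e he => hl e (List.mem_cons_of_mem _ he)
      have hxy0 : 0 ≤ φ x y := hnn x y hxy
      set P := prodSwaps l with hP
      have hPpq : P p ≠ P q := fun h => hpq (P.injective h)
      have hiter : ∀ z : α, prodSwaps ((x, y) :: l) z = Equiv.swap x y (P z) := by
        intro z; simp [Equiv.Perm.mul_apply, hP]
      have hφswap : ∀ z : α, z = x ∨ z = y → φ z (Equiv.swap x y z) = φ x y := by
        intro z hz
        rcases hz with h | h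
        · rw [h, Equiv.swap_apply_left]
        · rw [h, Equiv.swap_apply_right]; exact (hsym y x)
      by_cases h1 : Equiv.swap x y (P p) = P p <;> by_cases h2 : Equiv.swap x y (P q) = P q
      · -- both fixed
        rcases ih hl' p q hpq with ⟨w₁, w₂, hw₁, hw₂, hs⟩ | ⟨u, v, w₁, w₂, huv, hw₁, hw₂, hu, hv, hs⟩
        · exact Or.inl ⟨w₁, w₂, by rwa [hiter, h1], by rwa [hiter, h2], by
            rw [cost_cons]; linarith⟩
        · exact Or.inr ⟨u, v, w₁, w₂, huv, by rwa [hiter, h2], by rwa [hiter, h1], hu, hv, by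
            rw [cost_cons]; linarith⟩
      · -- q's token moves, p's fixed
        have hqmem : P q = x ∨ P q = y := by
          rcases Equiv.swap_apply_ne_self_iff.mp h2 with ⟨-, h⟩; exact h
        have hstep : φ (P q) (Equiv.swap x y (P q)) = φ x y := hφswap _ hqmem
        have hne : P q ≠ Equiv.swap x y (P q) := fun h => h2 h.symm
        rcases ih hl' p q hpq with ⟨w₁, w₂, hw₁, hw₂, hs⟩ | ⟨u, v, w₁, w₂, huv, hw₁, hw₂, hu, hv, hs⟩
        · obtain ⟨hwalk, hval⟩ := hw₂.concat φ hne
          refine Or.inl ⟨w₁, w₂ ++ [Equiv.swap x y (P q)], by rwa [hiter, h1], by rwa [hiter], ?_⟩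
          rw [cost_cons, hval]
          simp only [Multiset.sum_add, Multiset.sum_singleton, hstep]
          linarith
        · obtain ⟨hwalk, hval⟩ := hw₁.concat φ hne
          refine Or.inr ⟨u, v, w₁ ++ [Equiv.swap x y (P q)], w₂, huv, by rwa [hiter],
            by rwa [hiter, h1], List.mem_append_left _ hu, hv, ?_⟩
          rw [cost_cons, hval]
          simp only [Multiset.sum_add, Multiset.sum_singleton, hstep]
          linarith
      · -- p's token moves, q's fixed
        have hpmem : P p = x ∨ P p = y := by
          rcases Equiv.swap_apply_ne_self_iff.mp h1 with ⟨-, h⟩; exact h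
        have hstep : φ (P p) (Equiv.swap x y (P p)) = φ x y := hφswap _ hpmem
        have hne : P p ≠ Equiv.swap x y (P p) := fun h => h1 h.symm
        rcases ih hl' p q hpq with ⟨w₁, w₂, hw₁, hw₂, hs⟩ | ⟨u, v, w₁, w₂, huv, hw₁, hw₂, hu, hv, hs⟩
        · obtain ⟨hwalk, hval⟩ := hw₁.concat φ hne
          refine Or.inl ⟨w₁ ++ [Equiv.swap x y (P p)], w₂, by rwa [hiter], by rwa [hiter, h2], ?_⟩
          rw [cost_cons, hval]
          simp only [Multiset.sum_add, Multiset.sum_singleton, hstep]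
          linarith
        · obtain ⟨hwalk, hval⟩ := hw₂.concat φ hne
          refine Or.inr ⟨u, v, w₁, w₂ ++ [Equiv.swap x y (P p)], huv, by rwa [hiter, h2],
            by rwa [hiter], hu, List.mem_append_left _ hv, ?_⟩
          rw [cost_cons, hval]
          simp only [Multiset.sum_add, Multiset.sum_singleton, hstep]
          linarith
      · -- both move: the swap exchanges the two tokens
        have hpmem : P p = x ∨ P p = y := by
          rcases Equiv.swap_apply_ne_self_iff.mp h1 with ⟨-, h⟩; exact h
        have hqmem : P q = x ∨ P q = y := by
          rcases Equiv.swap_apply_ne_self_iff.mp h2 with ⟨-, h⟩; exact h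
        have hswap_p : Equiv.swap x y (P p) = P q := by
          rcases hpmem with hp' | hp' <;> rcases hqmem with hq' | hq'
          · exact absurd (hp'.trans hq'.symm) hPpq
          · rw [hp', hq', Equiv.swap_apply_left]
          · rw [hp', hq', Equiv.swap_apply_right]
          · exact absurd (hp'.trans hq'.symm) hPpq
        have hswap_q : Equiv.swap x y (P q) = P p := by
          have := congrArg (Equiv.swap x y) hswap_p
          rw [Equiv.swap_apply_self] at this
          exact this.symm
        have hφpq : φ (P p) (P q) = φ x y := by
          rw [← hswap_p]; exact hφswap _ hpmem
        rcases ih hl' p q hpq with ⟨w₁, w₂, hw₁, hw₂, hs⟩ | ⟨u, v, w₁, w₂, huv, hw₁, hw₂, hu, hv, hs⟩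
        · refine Or.inr ⟨P p, P q, w₁, w₂, hPpq, by rwa [hiter, hswap_q], by rwa [hiter, hswap_p],
            ?_, ?_, ?_⟩
          · exact mem_of_getLast? hw₁.2.2
          · exact mem_of_getLast? hw₂.2.2
          · rw [cost_cons, hφpq]; linarith
        · refine Or.inl ⟨w₁, w₂, by rwa [hiter, hswap_p], by rwa [hiter, hswap_q], ?_⟩
          have : 0 ≤ φ u v := hnn u v huv
          rw [cost_cons]; linarith

/-! ### final helper lemmas -/

lemma walk_two {pth : List α} {a b : α} (h1 : pth.head? = some a)
    (h2 : pth.getLast? = some b) (hab : a ≠ b) : ∃ c d t, pth = c :: d :: t := by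
  match pth with
  | [] => simp at h1
  | [c] =>
      simp only [List.head?_cons, Option.some_inj] at h1
      simp only [List.getLast?_singleton, Option.some_inj] at h2
      exact absurd (h1.symm.trans h2) hab
  | c :: d :: t => exact ⟨c, d, t, rfl⟩

lemma sSup_facts (hnn : ∀ a b : α, a ≠ b → 0 ≤ φ a b) {pth : List α} {a b : α}
    (hc : pth.Chain' (· ≠ ·)) (h1 : pth.head? = some a) (h2 : pth.getLast? = some b)
    (hab : a ≠ b) :
    0 ≤ sSup {x : ℝ | x ∈ vals φ pth} ∧
      (∀ m ∈ vals φ pth, m ≤ sSup {x : ℝ | x ∈ vals φ pth}) ∧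
      sSup {x : ℝ | x ∈ vals φ pth} ∈ vals φ pth := by
  obtain ⟨c, d, t, rfl⟩ := walk_two h1 h2 hab
  have hSeq : {x : ℝ | x ∈ vals φ (c :: d :: t)} = ↑(vals φ (c :: d :: t)).toFinset := by
    ext x; simp [Multiset.mem_toFinset]
  have hfin : {x : ℝ | x ∈ vals φ (c :: d :: t)}.Finite := by
    rw [hSeq]; exact (vals φ (c :: d :: t)).toFinset.finite_toSet
  have hbdd : BddAbove {x : ℝ | x ∈ vals φ (c :: d :: t)} := hfin.bddAbove
  have hmem : φ c d ∈ vals φ (c :: d :: t) := by simp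
  have hle : ∀ m ∈ vals φ (c :: d :: t), m ≤ sSup {x : ℝ | x ∈ vals φ (c :: d :: t)} :=
    fun m hm => le_csSup hbdd hm
  have h0 : 0 ≤ sSup {x : ℝ | x ∈ vals φ (c :: d :: t)} :=
    le_trans (hnn c d (List.isChain_cons_cons.mp hc).1) (hle _ hmem)
  have hne : (vals φ (c :: d :: t)).toFinset.Nonempty := ⟨φ c d, by simp [Multiset.mem_toFinset]⟩
  have hsup_mem : sSup {x : ℝ | x ∈ vals φ (c :: d :: t)} ∈ vals φ (c :: d :: t) := by
    rw [hSeq, hne.csSup_eq_max']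
    have := (vals φ (c :: d :: t)).toFinset.max'_mem hne
    rwa [Multiset.mem_toFinset] at this
  exact ⟨h0, hle, hsup_mem⟩

lemma IsWalk.appendW {w₁ w₂ : List α} {a u v b : α} (h₁ : IsWalk w₁ a u) (h₂ : IsWalk w₂ v b)
    (huv : u ≠ v) : IsWalk (w₁ ++ w₂) a b ∧
      vals φ (w₁ ++ w₂) = vals φ w₁ + (φ u v ::ₘ vals φ w₂) := by
  obtain ⟨t, rfl⟩ : ∃ t, w₂ = v :: t := by
    cases w₂ with
    | nil => exact absurd h₂.2.1 (by simp)
    | cons c t =>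
        refine ⟨t, ?_⟩
        have := h₂.2.1
        simp only [List.head?_cons, Option.some_inj] at this
        rw [this]
  constructor
  · refine ⟨?_, ?_, ?_⟩
    · refine List.isChain_append.mpr ⟨h₁.1, h₂.1, ?_⟩
      intro x hx y hy
      rw [h₁.2.2] at hx
      simp only [Option.mem_some_iff, List.head?_cons] at hx hy
      rw [← hx, ← hy]; exact huv
    · rw [List.head?_append, h₁.2.1]; rfl
    · rw [getLast?_append_ne_nil w₁ (by simp)]; exact h₂.2.2
  · rw [vals_append_cons φ w₁ v t, vals_concat φ w₁ h₁.ne_nil v, h₁.getLast_eq,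
      show vals φ w₁ + {φ u v} = {φ u v} + vals φ w₁ from add_comm _ _, add_assoc,
      Multiset.singleton_add]
    exact (Multiset.add_cons _ _ _).symm

/-! ### the lower bound -/

theorem lower_bound (hnn : ∀ a b : α, a ≠ b → 0 ≤ φ a b) (hsym : ∀ a b : α, φ a b = φ b a)
    {a b : α} (hab : a ≠ b) (l : List (α × α)) (hl : ∀ e ∈ l, e.1 ≠ e.2)
    (hprod : prodSwaps l = Equiv.swap a b) :
    ∃ pth : List α, pth.Nodup ∧ pth.head? = some a ∧ pth.getLast? = some b ∧
      2 * (vals φ pth).sum - sSup {x : ℝ | x ∈ vals φ pth} ≤ cost φ l := by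
  have hPa : prodSwaps l a = b := by rw [hprod]; exact Equiv.swap_apply_left a b
  have hPb : prodSwaps l b = a := by rw [hprod]; exact Equiv.swap_apply_right a b
  rcases invariant φ hnn hsym l hl a b hab with
    ⟨w₁, w₂, hw₁, hw₂, hs⟩ | ⟨u, v, w₁, w₂, huv, hw₁, hw₂, hu, hv, hs⟩
  · -- even case
    rw [hPa] at hw₁; rw [hPb] at hw₂
    obtain ⟨W, hW, hWsum⟩ : ∃ W, IsWalk W a b ∧ 2 * (vals φ W).sum ≤ cost φ l := by
      rcases le_total ((vals φ w₁).sum) ((vals φ w₂).sum) with h | h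
      · exact ⟨w₁, hw₁, by linarith⟩
      · exact ⟨w₂.reverse, hw₂.reverse, by rw [vals_reverse φ hsym]; linarith⟩
    obtain ⟨pth, hnd, hh, hl2, hcp, hvle⟩ := extract_aux φ W.length W le_rfl hW.1
    have hsum_le : (vals φ pth).sum ≤ (vals φ W).sum :=
      sum_le_sum_of_le hvle (vals_nonneg φ hnn hW.1)
    have hh' : pth.head? = some a := by rw [hh, hW.2.1]
    have hl' : pth.getLast? = some b := by rw [hl2, hW.2.2]
    obtain ⟨h0, -, -⟩ := sSup_facts φ hnn hcp hh' hl' hab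
    exact ⟨pth, hnd, hh', hl', by linarith⟩
  · -- odd case
    rw [hPa] at hw₂; rw [hPb] at hw₁
    -- hw₁ : IsWalk w₁ a a, hw₂ : IsWalk w₂ b b
    have hφuv : 0 ≤ φ u v := hnn u v huv
    obtain ⟨X, Y, rfl⟩ := List.append_of_mem hu
    obtain ⟨Z, T, rfl⟩ := List.append_of_mem hv
    obtain ⟨hcX, hcuY, hXu⟩ := List.isChain_append.mp hw₁.1
    obtain ⟨hcZ, hcvT, hZv⟩ := List.isChain_append.mp hw₂.1
    have hcXu : (X ++ [u]).Chain' (· ≠ ·) := by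
      refine List.isChain_append.mpr ⟨hcX, List.isChain_singleton u, ?_⟩
      intro x hx y hy
      simp only [List.head?_cons, Option.mem_some_iff] at hy
      subst hy
      exact hXu x hx u (by simp)
    have hcZv : (Z ++ [v]).Chain' (· ≠ ·) := by
      refine List.isChain_append.mpr ⟨hcZ, List.isChain_singleton v, ?_⟩
      intro x hx y hy
      simp only [List.head?_cons, Option.mem_some_iff] at hy
      subst hy
      exact hZv x hx v (by simp)
    have wXu : IsWalk (X ++ [u]) a u :=
      ⟨hcXu, by rw [show (X ++ [u]).head? = (X ++ u :: Y).head? from by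
          simp [List.head?_append], hw₁.2.1], List.getLast?_concat⟩
    have wuY : IsWalk (u :: Y) u a :=
      ⟨hcuY, rfl, by rw [← getLast?_append_ne_nil X (by simp : (u :: Y : List α) ≠ [])]
                     exact hw₁.2.2⟩
    have wZv : IsWalk (Z ++ [v]) b v :=
      ⟨hcZv, by rw [show (Z ++ [v]).head? = (Z ++ v :: T).head? from by
          simp [List.head?_append], hw₂.2.1], List.getLast?_concat⟩
    have wvT : IsWalk (v :: T) v b :=
      ⟨hcvT, rfl, by rw [← getLast?_append_ne_nil Z (by simp : (v :: T : List α) ≠ [])]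
                     exact hw₂.2.2⟩
    obtain ⟨wα, hvalsα⟩ := wXu.appendW φ wvT huv
    obtain ⟨wγ, hvalsγ⟩ := wZv.appendW φ wuY (Ne.symm huv)
    have hφvu : φ v u = φ u v := hsym v u
    have hs₁ : vals φ (X ++ u :: Y) = vals φ (X ++ [u]) + vals φ (u :: Y) :=
      vals_append_cons φ X u Y
    have hs₂ : vals φ (Z ++ v :: T) = vals φ (Z ++ [v]) + vals φ (v :: T) :=
      vals_append_cons φ Z v T
    have hsumα : (vals φ ((X ++ [u]) ++ (v :: T))).sum
        = (vals φ (X ++ [u])).sum + φ u v + (vals φ (v :: T)).sum := by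
      rw [hvalsα]; simp [Multiset.sum_add]; ring
    have hsumγ : (vals φ ((Z ++ [v]) ++ (u :: Y))).sum
        = (vals φ (Z ++ [v])).sum + φ u v + (vals φ (u :: Y)).sum := by
      rw [hvalsγ]; simp [Multiset.sum_add, hφvu]; ring
    have hmemα : φ u v ∈ vals φ ((X ++ [u]) ++ (v :: T)) := by rw [hvalsα]; simp
    have hmemγ : φ u v ∈ vals φ ((Z ++ [v]) ++ (u :: Y)) := by rw [hvalsγ]; simp [hφvu]
    have hsum_ineq : (vals φ (X ++ u :: Y)).sum + (vals φ (Z ++ v :: T)).sum + φ u v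
        ≤ cost φ l := hs
    obtain ⟨W, hW, hmemW, hWsum⟩ : ∃ W, IsWalk W a b ∧ φ u v ∈ vals φ W ∧
        2 * (vals φ W).sum ≤ cost φ l + φ u v := by
      rw [hs₁] at hsum_ineq; rw [hs₂] at hsum_ineq
      simp only [Multiset.sum_add] at hsum_ineq
      rcases le_total ((vals φ ((X ++ [u]) ++ (v :: T))).sum)
        ((vals φ ((Z ++ [v]) ++ (u :: Y))).sum) with h | h
      · exact ⟨_, wα, hmemα, by rw [hsumα]; rw [hsumα, hsumγ] at h; linarith⟩
      · refine ⟨_, wγ.reverse, ?_, ?_⟩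
        · rwa [vals_reverse φ hsym]
        · rw [vals_reverse φ hsym, hsumγ]; rw [hsumα, hsumγ] at h; linarith
    obtain ⟨pth, hnd, hh, hl2, hcp, hvle⟩ := extract_aux φ W.length W le_rfl hW.1
    have hWnn : ∀ x ∈ vals φ W, 0 ≤ x := vals_nonneg φ hnn hW.1
    have hsum_le : (vals φ pth).sum ≤ (vals φ W).sum := sum_le_sum_of_le hvle hWnn
    have hh' : pth.head? = some a := by rw [hh, hW.2.1]
    have hl' : pth.getLast? = some b := by rw [hl2, hW.2.2]
    obtain ⟨h0, hmax, -⟩ := sSup_facts φ hnn hcp hh' hl' hab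
    refine ⟨pth, hnd, hh', hl', ?_⟩
    by_cases hmem2 : φ u v ∈ vals φ pth
    · have := hmax _ hmem2
      linarith
    · have herase : vals φ pth ≤ (vals φ W).erase (φ u v) := by
        rw [← Multiset.erase_of_notMem hmem2]
        exact Multiset.erase_le_erase _ hvle
      have hsum_er : ((vals φ W).erase (φ u v)).sum = (vals φ W).sum - φ u v := by
        have := Multiset.cons_erase hmemW
        have h2 := congrArg Multiset.sum this
        rw [Multiset.sum_cons] at h2
        linarith
      have hnn_er : ∀ x ∈ (vals φ W).erase (φ u v), 0 ≤ x :=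
        fun x hx => hWnn x (Multiset.mem_of_mem_erase hx)
      have : (vals φ pth).sum ≤ (vals φ W).sum - φ u v := by
        rw [← hsum_er]; exact sum_le_sum_of_le herase hnn_er
      linarith

lemma cost_reverse (l : List (α × α)) : cost φ l.reverse = cost φ l := by
  simp [cost, List.map_reverse, List.sum_reverse]

/-! ### the upper bound -/

theorem upper_bound (hnn : ∀ a b : α, a ≠ b → 0 ≤ φ a b) (hsym : ∀ a b : α, φ a b = φ b a)
    {a b : α} (hab : a ≠ b) {pth : List α} (hnd : pth.Nodup)
    (hh : pth.head? = some a) (hl : pth.getLast? = some b) :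
    ∃ L : List (α × α), (∀ e ∈ L, e.1 ≠ e.2) ∧ prodSwaps L = Equiv.swap a b ∧
      cost φ L = 2 * (vals φ pth).sum - sSup {x : ℝ | x ∈ vals φ pth} := by
  have hc : pth.Chain' (· ≠ ·) := List.Pairwise.isChain hnd
  obtain ⟨h0, hmaxle, hsup_mem⟩ := sSup_facts φ hnn hc hh hl hab
  obtain ⟨e, he, hμ⟩ : ∃ e ∈ eL pth, φ e.1 e.2 = sSup {x : ℝ | x ∈ vals φ pth} :=
    List.mem_map.mp (Multiset.mem_coe.mp hsup_mem)
  obtain ⟨pre, suf, hsplit⟩ := mem_eL_split pth e he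
  obtain ⟨eu, ev⟩ := e
  dsimp only at hsplit hμ
  have heuv : eu ≠ ev := mem_eL_ne hc he
  have hAB : pth = (pre ++ [eu]) ++ (ev :: suf) := by simp [hsplit]
  set A : List α := pre ++ [eu] with hA
  set B : List α := ev :: suf with hB
  have hAne : A ≠ [] := by simp [hA]
  have hBne : B ≠ [] := by simp [hB]
  obtain ⟨hndA, hndB, hdisj⟩ := List.nodup_append.mp (hAB ▸ hnd)
  have hcAB : (A ++ B).Chain' (· ≠ ·) := hAB ▸ hc
  obtain ⟨hcA, hcB, -⟩ := List.isChain_append.mp hcAB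
  have hheadA : A.head? = some a := by
    rw [← hh, hAB, List.head?_append, List.head?_append]
    simp only [hA, List.head?_append, List.head?_cons]
    cases hpre : pre.head? <;> simp
  have hlastB : B.getLast? = some b := by
    rw [← hl, hAB, getLast?_append_ne_nil A hBne]
  have hwA : IsWalk A a eu := ⟨hcA, hheadA, by simp [hA]⟩
  have hwB : IsWalk B ev b := ⟨hcB, rfl, hlastB⟩
  have heuA : eu ∈ A := by simp [hA]
  have hevB : ev ∈ B := by simp [hB]
  have hbB : b ∈ B := mem_of_getLast? hlastB
  set g₁ : Equiv.Perm α := prodSwaps (eL A) with hg₁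
  set g₂ : Equiv.Perm α := prodSwaps (eL B.reverse) with hg₂
  have hg₁u : g₁ eu = a := by
    have h1 := prodSwaps_eL_getLast A hAne
    rw [hwA.getLast_eq] at h1
    rw [hg₁, h1]
    have h2 := List.head?_eq_head hAne
    rw [h2, Option.some_inj] at hheadA
    exact hheadA
  have hwBr : IsWalk B.reverse b ev := hwB.reverse
  have hBrne : B.reverse ≠ [] := hwBr.ne_nil
  have hg₂v : g₂ ev = b := by
    have h1 := prodSwaps_eL_getLast B.reverse hBrne
    rw [hwBr.getLast_eq] at h1
    rw [hg₂, h1]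
    have h2 := List.head?_eq_head hBrne
    have h3 := hwBr.2.1
    rw [h2, Option.some_inj] at h3
    exact h3
  have hg₂u : g₂ eu = eu := by
    refine prodSwaps_eL_fix B.reverse eu ?_
    rw [List.mem_reverse]
    exact fun h => hdisj _ heuA _ h rfl
  have hg₁b : g₁ b = b := prodSwaps_eL_fix A b (fun h => hdisj _ h _ hbB rfl)
  set L : List (α × α) :=
    (eL A ++ eL B.reverse) ++ [(eu, ev)] ++ (eL A ++ eL B.reverse).reverse with hLdef
  have hmemL : ∀ e' ∈ L, e'.1 ≠ e'.2 := by
    intro e' he'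
    rw [hLdef] at he'
    simp only [List.mem_append, List.mem_reverse, List.mem_singleton] at he'
    rcases he' with ((h | h) | h) | (h | h)
    · exact mem_eL_ne hcA h
    · exact mem_eL_ne hwBr.1 h
    · rw [h]; exact heuv
    · exact mem_eL_ne hcA h
    · exact mem_eL_ne hwBr.1 h
  have hprodL : prodSwaps L = Equiv.swap a b := by
    have hG : ∀ z, (g₁ * g₂) z = g₁ (g₂ z) := fun z => rfl
    have hGu : (g₁ * g₂) eu = a := by rw [hG, hg₂u, hg₁u]
    have hGv : (g₁ * g₂) ev = b := by rw [hG, hg₂v, hg₁b]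
    rw [hLdef, prodSwaps_append, prodSwaps_append, prodSwaps_append, prodSwaps_reverse,
      prodSwaps_append]
    have : prodSwaps [(eu, ev)] = Equiv.swap eu ev := by simp [prodSwaps]
    rw [this, ← hg₁, ← hg₂, ← hGu, ← hGv]
    rw [Equiv.swap_apply_apply (g₁ * g₂) eu ev]
  refine ⟨L, hmemL, hprodL, ?_⟩
  have hsum_split : (vals φ pth).sum = (vals φ A).sum + φ eu ev + (vals φ B).sum := by
    rw [hAB, hA, hB, vals_append_cons φ (pre ++ [eu]) ev suf,
      vals_concat φ (pre ++ [eu]) (by simp) ev, List.getLast_concat]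
    simp [Multiset.sum_add]
  rw [hLdef, cost_append, cost_append, cost_append, cost_reverse, cost_append,
    cost_eL_eq, cost_eL_eq]
  have hBrev : (vals φ B.reverse).sum = (vals φ B).sum := by rw [vals_reverse φ hsym]
  have hone : cost φ [(eu, ev)] = φ eu ev := by simp [cost]
  rw [hone, hBrev, ← hμ]
  rw [hsum_split]
  ring

end Perm
end Stmt5Aux


section Bridge

lemma tpCost_eq (φ : Fin n → Fin n → ℝ) (p : List (Fin n)) :
    tpCost φ p = 2 * (Stmt5Aux.vals φ p).sum - sSup {x : ℝ | x ∈ Stmt5Aux.vals φ p} := by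
  unfold tpCost pathCost
  rw [← Stmt5Aux.vals_sum_eq_pathSum]
  have hset : {x : ℝ | ∃ q ∈ p.zip p.tail, φ q.1 q.2 = x}
      = {x : ℝ | x ∈ Stmt5Aux.vals φ p} := by
    ext x
    rw [Stmt5Aux.zip_tail_eq_eL]
    simp [Stmt5Aux.vals]
  rw [hset]

lemma tp_nonneg (φ : Fin n → Fin n → ℝ) (hnn : ∀ a b : Fin n, a ≠ b → 0 ≤ φ a b)
    {p : List (Fin n)} {a b : Fin n} (hnd : p.Nodup) (hh : p.head? = some a)
    (hl : p.getLast? = some b) (hab : a ≠ b) : 0 ≤ tpCost φ p := by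
  rw [tpCost_eq]
  have hc := List.Pairwise.isChain hnd
  obtain ⟨h0, hle, hmem⟩ := Stmt5Aux.sSup_facts φ hnn hc hh hl hab
  have hnnv := Stmt5Aux.vals_nonneg φ hnn hc
  have hsum0 : 0 ≤ (Stmt5Aux.vals φ p).sum := Multiset.sum_nonneg hnnv
  have hsup_le : sSup {x : ℝ | x ∈ Stmt5Aux.vals φ p} ≤ (Stmt5Aux.vals φ p).sum :=
    Multiset.single_le_sum hnnv _ hmem
  linarith

end Bridge

/-- for distinct `a, b`, the minimum decomposition cost of `swap a b`
equals the minimum transposition path cost over all paths from `a` to `b`. -/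
theorem stmt5 (φ : Fin n → Fin n → ℝ)
    (hnn : ∀ a b : Fin n, a ≠ b → 0 ≤ φ a b)
    (hsym : ∀ a b : Fin n, φ a b = φ b a)
    (a b : Fin n) (hab : a ≠ b) :
    Mcost φ (Equiv.swap a b)
      = sInf {c : ℝ | ∃ p : List (Fin n), IsPathList p a b ∧ tpCost φ p = c} := by
  classical
  have hbddDec : BddBelow {c : ℝ | ∃ l : List (Fin n × Fin n), (∀ p ∈ l, p.1 ≠ p.2) ∧
      (l.map fun p => Equiv.swap p.1 p.2).prod = Equiv.swap a b ∧
      (l.map fun p => φ p.1 p.2).sum = c} := by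
    refine ⟨0, ?_⟩
    rintro c ⟨l, hl, -, rfl⟩
    exact Stmt5Aux.cost_nonneg φ hnn l hl
  have hbddPath : BddBelow {c : ℝ | ∃ p, IsPathList p a b ∧ tpCost φ p = c} := by
    refine ⟨0, ?_⟩
    rintro c ⟨p, ⟨hnd, hh, hl⟩, rfl⟩
    exact tp_nonneg φ hnn hnd hh hl hab
  unfold Mcost
  apply le_antisymm
  · have hne : Set.Nonempty {c : ℝ | ∃ p, IsPathList p a b ∧ tpCost φ p = c} :=
      ⟨tpCost φ [a, b], [a, b], ⟨by simp [hab], by simp, by simp⟩, rfl⟩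
    refine le_csInf hne ?_
    rintro c ⟨p, ⟨hnd, hh, hl⟩, rfl⟩
    obtain ⟨L, hL1, hL2, hL3⟩ := Stmt5Aux.upper_bound φ hnn hsym hab hnd hh hl
    refine csInf_le hbddDec ⟨L, hL1, hL2, ?_⟩
    rw [show (L.map fun e => φ e.1 e.2).sum = Stmt5Aux.cost φ L from rfl, hL3, tpCost_eq]
  · refine le_csInf ?_ ?_
    · exact ⟨φ a b, [(a, b)], by simp [hab], by simp, by simp⟩
    · rintro c ⟨l, hl, hprod, rfl⟩
      obtain ⟨pth, hnd, hh, hl2, hle⟩ := Stmt5Aux.lower_bound φ hnn hsym hab l hl hprod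
      refine le_trans (csInf_le hbddPath ⟨pth, ⟨hnd, hh, hl2⟩, rfl⟩) ?_
      rw [tpCost_eq]
      exact hle
end

section
/- Let w_1, …, w_{n−1} be nonnegative reals and let 1 ≤ i < j ≤ n. The minimum, over all decompositions of the transposition swapping i and j into a product of adjacent transpositions swap(t, t+1) (1 ≤ t ≤ n−1), of the total weight (the sum of w_t over the adjacent transpositions used, with multiplicity) equals 2 Σ_{t=i}^{j−1} w_t − max_{i ≤ t ≤ j−1} w_t. -/
open Equiv Finset
open Fin.NatCast
variable {n : ℕ} [NeZero n]

def sw (n : ℕ) [NeZero n] (t : ℕ) : Equiv.Perm (Fin n) :=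
  Equiv.swap (t : Fin n) ((t + 1 : ℕ) : Fin n)

lemma val_natCast_of_lt {a : ℕ} (h : a < n) : (((a : Fin n)) : ℕ) = a := by
  simp [Fin.val_natCast, Nat.mod_eq_of_lt h]

lemma sw_apply {u : ℕ} (hu : u + 1 < n) (x : Fin n) :
    ((sw n u x : Fin n) : ℕ) = if (x : ℕ) = u then u + 1 else if (x : ℕ) = u + 1 then u else x := by
  have h1 : ((u : Fin n) : ℕ) = u := val_natCast_of_lt (by omega)
  have h2 : (((u+1 : ℕ) : Fin n) : ℕ) = u + 1 := val_natCast_of_lt hu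
  rw [sw, Equiv.swap_apply_def]
  split_ifs with a b c <;> simp_all [Fin.ext_iff]

lemma sw_cut {u t : ℕ} (hu : u + 1 < n) (hut : u ≠ t) (x : Fin n) :
    ((sw n u x : Fin n) : ℕ) ≤ t ↔ (x : ℕ) ≤ t := by
  rw [sw_apply hu]
  split_ifs <;> omega

lemma prod_cut {t : ℕ} {m : List ℕ} (hm : ∀ u ∈ m, u + 1 < n) (ht : t ∉ m) (x : Fin n) :
    (((m.map (sw n)).prod x : Fin n) : ℕ) ≤ t ↔ (x : ℕ) ≤ t := by
  induction m with
  | nil => simp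
  | cons a m ih =>
    simp only [List.map_cons, List.prod_cons, Equiv.Perm.mul_apply]
    rw [sw_cut (hm a (by simp)) (by simp at ht; omega)]
    exact ih (fun u hu => hm u (by simp [hu])) (by simp at ht; exact ht.2)

lemma chainC1 {t t' : ℕ} (htt : t < t') (ht : t + 1 < n) (ht' : t' + 1 < n)
    {l1 l2 l3 : List ℕ} (hm1 : ∀ u ∈ l1, u + 1 < n) (hm2 : ∀ u ∈ l2, u + 1 < n)
    (hm3 : ∀ u ∈ l3, u + 1 < n)
    (h1 : t ∉ l1) (h2 : t' ∉ l2) (h3 : t' ∉ l3) (x : Fin n) (hx : t' < (x : ℕ)) :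
    t < ((((l1 ++ t' :: (l2 ++ t :: l3)).map (sw n)).prod x : Fin n) : ℕ) := by
  simp only [List.map_append, List.prod_append, List.map_cons, List.prod_cons,
    Equiv.Perm.mul_apply]
  set x1 := (List.map (sw n) l3).prod x with hx1
  have hx1' : t' < (x1 : ℕ) := by
    by_contra h; push_neg at h
    rw [prod_cut hm3 h3] at h; omega
  set x2 := sw n t x1 with hx2
  have hx2' : t' < (x2 : ℕ) := by
    rw [hx2, sw_apply ht]; split_ifs <;> omega
  set x3 := (List.map (sw n) l2).prod x2 with hx3
  have hx3' : t' < (x3 : ℕ) := by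
    by_contra h; push_neg at h
    rw [prod_cut hm2 h2] at h; omega
  set x4 := sw n t' x3 with hx4
  have hx4' : t < (x4 : ℕ) := by
    rw [hx4, sw_apply ht']; split_ifs <;> omega
  by_contra h; push_neg at h
  rw [prod_cut hm1 h1] at h; omega

lemma chainC2 {t t' : ℕ} (htt : t < t') (ht : t + 1 < n) (ht' : t' + 1 < n)
    {l1 l2 l3 : List ℕ} (hm1 : ∀ u ∈ l1, u + 1 < n) (hm2 : ∀ u ∈ l2, u + 1 < n)
    (hm3 : ∀ u ∈ l3, u + 1 < n)
    (h1 : t' ∉ l1) (h2 : t ∉ l2) (h3 : t ∉ l3) (x : Fin n) (hx : (x : ℕ) ≤ t) :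
    ((((l1 ++ t :: (l2 ++ t' :: l3)).map (sw n)).prod x : Fin n) : ℕ) ≤ t' := by
  simp only [List.map_append, List.prod_append, List.map_cons, List.prod_cons,
    Equiv.Perm.mul_apply]
  set x1 := (List.map (sw n) l3).prod x with hx1
  have hx1' : (x1 : ℕ) ≤ t := by rw [prod_cut hm3 h3]; exact hx
  set x2 := sw n t' x1 with hx2
  have hx2' : (x2 : ℕ) ≤ t := by
    rw [hx2, sw_apply ht']; split_ifs <;> omega
  set x3 := (List.map (sw n) l2).prod x2 with hx3
  have hx3' : (x3 : ℕ) ≤ t := by rw [prod_cut hm2 h2]; exact hx2'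
  set x4 := sw n t x3 with hx4
  have hx4' : (x4 : ℕ) ≤ t' := by
    rw [hx4, sw_apply ht]; split_ifs <;> omega
  rw [prod_cut hm1 h1]; exact hx4'

lemma count_one_split {α : Type*} [DecidableEq α] {a : α} {l : List α}
    (h : l.count a = 1) : ∃ l1 l2, l = l1 ++ a :: l2 ∧ a ∉ l1 ∧ a ∉ l2 := by
  induction l with
  | nil => simp at h
  | cons b l ih =>
    by_cases hb : b = a
    · subst hb
      rw [List.count_cons_self] at h
      have : l.count b = 0 := by omega
      exact ⟨[], l, by simp, by simp, List.count_eq_zero.mp this⟩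
    · rw [List.count_cons_of_ne hb] at h
      obtain ⟨l1, l2, rfl, h1, h2⟩ := ih h
      exact ⟨b :: l1, l2, by simp, by simp [h1]; exact fun hh => hb hh.symm, h2⟩

lemma mem_of_cut {l : List ℕ} (hl : ∀ u ∈ l, u + 1 < n) {i j : Fin n}
    (hprod : (l.map (sw n)).prod = Equiv.swap i j) {t : ℕ}
    (h1 : (i : ℕ) ≤ t) (h2 : t < (j : ℕ)) : t ∈ l := by
  by_contra h
  have := (prod_cut hl h i).mpr h1
  rw [hprod, Equiv.swap_apply_left] at this
  omega

lemma not_two_ones {l : List ℕ} (hl : ∀ u ∈ l, u + 1 < n) {i j : Fin n}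
    (hprod : (l.map (sw n)).prod = Equiv.swap i j) {t t' : ℕ}
    (hit : (i : ℕ) ≤ t) (htt : t < t') (htj : t' < (j : ℕ)) (hij : (i:ℕ) < (j:ℕ)) :
    ¬(l.count t = 1 ∧ l.count t' = 1) := by
  rintro ⟨hc1, hc2⟩
  have ht : t + 1 < n := by have := j.isLt; omega
  have ht' : t' + 1 < n := by have := j.isLt; omega
  obtain ⟨a1, a2, rfl, hn1, hn2⟩ := count_one_split hc1
  have hcc : (a1 ++ t :: a2).count t' = 1 := hc2
  rw [List.count_append, List.count_cons] at hcc
  have hne : ¬ (t = t') := by omega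
  by_cases hcase : t' ∈ a1
  · -- t' occurs in a1 : order is ... t' ... t ... : C1
    have hca1 : a1.count t' = 1 := by
      have h2' : a2.count t' = 0 := by
        have := List.count_pos_iff.mpr hcase; simp [hne] at hcc; omega
      simp [hne] at hcc; omega
    obtain ⟨m1, m2, rfl, hq1, hq2⟩ := count_one_split hca1
    have h2' : t' ∉ a2 := by
      simp [hne] at hcc
      exact List.count_eq_zero.mp (by omega)
    have hkey := chainC1 (n := n) htt ht ht'
      (l1 := m1) (l2 := m2) (l3 := a2)
      (fun u hu => hl u (by simp [hu])) (fun u hu => hl u (by simp [hu]))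
      (fun u hu => hl u (by simp [hu]))
      (by intro hc; exact hn1 (by simp [hc])) hq2 h2' j htj
    rw [show m1 ++ t' :: (m2 ++ t :: a2) = (m1 ++ t' :: m2) ++ t :: a2 by simp] at hkey
    rw [hprod, Equiv.swap_apply_right] at hkey
    omega
  · -- t' occurs in a2 : order is ... t ... t' ... : C2
    have hca2 : a2.count t' = 1 := by
      have h1' : a1.count t' = 0 := List.count_eq_zero.mpr hcase
      simp [hne] at hcc; omega
    obtain ⟨m1, m2, rfl, hq1, hq2⟩ := count_one_split hca2
    have hkey := chainC2 (n := n) htt ht ht'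
      (l1 := a1) (l2 := m1) (l3 := m2)
      (fun u hu => hl u (by simp [hu])) (fun u hu => hl u (by simp [hu]))
      (fun u hu => hl u (by simp [hu]))
      hcase (by intro hc; exact hn2 (by simp [hc])) (by intro hc; exact hn2 (by simp [hc]))
      i hit
    rw [hprod, Equiv.swap_apply_left] at hkey
    omega

lemma sw_fix {u a : ℕ} (hu : u + 1 < n) (ha : a < n) (h1 : a ≠ u) (h2 : a ≠ u + 1) :
    sw n u (a : Fin n) = (a : Fin n) := by
  have := sw_apply hu (a : Fin n)
  rw [val_natCast_of_lt ha] at this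
  simp [h1, h2] at this
  exact Fin.ext (by rw [this, val_natCast_of_lt ha])

lemma sw_up {u : ℕ} (hu : u + 1 < n) : sw n u (u : Fin n) = ((u + 1 : ℕ) : Fin n) := by
  have := sw_apply hu (u : Fin n)
  rw [val_natCast_of_lt (by omega : u < n)] at this
  simp at this
  exact Fin.ext (by rw [this, val_natCast_of_lt hu])

lemma sw_down {u : ℕ} (hu : u + 1 < n) : sw n u ((u + 1 : ℕ) : Fin n) = (u : Fin n) := by
  rw [← sw_up hu, sw]
  exact Equiv.swap_apply_self _ _ _

lemma sw_inv (u : ℕ) : (sw n u)⁻¹ = sw n u := by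
  simp [sw]

def wR : ℕ → ℕ → List ℕ
  | a, 0 => [a]
  | a, (k+1) => (a+k+1) :: (wR a k ++ [a+k+1])

lemma wR_mem {a k u : ℕ} (h : u ∈ wR a k) : a ≤ u ∧ u ≤ a + k := by
  induction k with
  | zero => simp [wR] at h; omega
  | succ k ih =>
    simp [wR] at h
    rcases h with h | h | h
    · omega
    · have := ih h; omega
    · omega

lemma wR_prod {a k : ℕ} (h : a + k + 2 ≤ n) :
    ((wR a k).map (sw n)).prod = Equiv.swap (a : Fin n) ((a + k + 1 : ℕ) : Fin n) := by
  induction k with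
  | zero => simp [wR, sw]
  | succ k ih =>
    have hk : a + k + 2 ≤ n := by omega
    simp only [wR, List.map_cons, List.map_append, List.prod_cons, List.prod_append,
      List.map_nil, List.prod_nil, mul_one, List.prod_singleton] -- shape: sw * prod * sw
    rw [ih hk]
    have hu : (a + k + 1) + 1 < n := by omega
    have e1 : sw n (a+k+1) (a : Fin n) = (a : Fin n) :=
      sw_fix hu (by omega) (by omega) (by omega)
    have e2 : sw n (a+k+1) ((a + k + 1 : ℕ) : Fin n) = ((a + (k+1) + 1 : ℕ) : Fin n) := by
      rw [show a + (k+1) + 1 = (a+k+1)+1 from rfl]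
      exact sw_up hu
    calc sw n (a+k+1) * Equiv.swap (a : Fin n) ((a + k + 1 : ℕ) : Fin n) * sw n (a+k+1)
        = sw n (a+k+1) * Equiv.swap (a : Fin n) ((a + k + 1 : ℕ) : Fin n) * (sw n (a+k+1))⁻¹ := by
          rw [sw_inv]
      _ = Equiv.swap (sw n (a+k+1) (a : Fin n)) (sw n (a+k+1) ((a + k + 1 : ℕ) : Fin n)) := by
          rw [← Equiv.swap_apply_apply]
      _ = Equiv.swap (a : Fin n) ((a + (k+1) + 1 : ℕ) : Fin n) := by rw [e1, e2]

def wL (t : ℕ) (L : List ℕ) : ℕ → List ℕ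
  | 0 => L
  | (m+1) => (t - (m+1)) :: (wL t L m ++ [t - (m+1)])

lemma wL_mem {t m u : ℕ} {L : List ℕ} (hm : m ≤ t) (h : u ∈ wL t L m) : u ∈ L ∨ (t - m ≤ u ∧ u < t) := by
  induction m with
  | zero => simp [wL] at h; exact Or.inl h
  | succ m ih =>
    simp [wL] at h
    rcases h with h | h | h
    · right; omega
    · rcases ih (by omega) h with h | h
      · exact Or.inl h
      · right; omega
    · right; omega

lemma wL_prod {t b m : ℕ} {L : List ℕ} (hm : m ≤ t) (htb : t < b) (hb : b < n)
    (hL : (L.map (sw n)).prod = Equiv.swap (t : Fin n) (b : Fin n)) :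
    ((wL t L m).map (sw n)).prod = Equiv.swap ((t - m : ℕ) : Fin n) (b : Fin n) := by
  induction m with
  | zero => simpa [wL] using hL
  | succ m ih =>
    have ihm := ih (by omega)
    simp only [wL, List.map_cons, List.map_append, List.prod_cons, List.prod_append,
      List.map_nil, List.prod_nil, mul_one, List.prod_singleton]
    rw [ihm]
    have hu : (t - (m+1)) + 1 < n := by omega
    have e0 : t - (m+1) + 1 = t - m := by omega
    have e1 : sw n (t - (m+1)) ((t - m : ℕ) : Fin n) = ((t - (m+1) : ℕ) : Fin n) := by
      rw [← e0]
      exact sw_down hu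
    have e2 : sw n (t - (m+1)) (b : Fin n) = (b : Fin n) :=
      sw_fix hu hb (by omega) (by omega)
    calc sw n (t-(m+1)) * Equiv.swap ((t - m : ℕ) : Fin n) (b : Fin n) * sw n (t-(m+1))
        = sw n (t-(m+1)) * Equiv.swap ((t - m : ℕ) : Fin n) (b : Fin n) * (sw n (t-(m+1)))⁻¹ := by
          rw [sw_inv]
      _ = Equiv.swap (sw n (t-(m+1)) ((t - m : ℕ) : Fin n)) (sw n (t-(m+1)) (b : Fin n)) := by
          rw [← Equiv.swap_apply_apply]
      _ = Equiv.swap ((t - (m+1) : ℕ) : Fin n) (b : Fin n) := by rw [e1, e2]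

lemma wR_sum (w : ℕ → ℝ) (a k : ℕ) :
    ((wR a k).map w).sum = w a + 2 * ∑ u ∈ Finset.Ico (a+1) (a+k+1), w u := by
  induction k with
  | zero => simp [wR]
  | succ k ih =>
    simp only [wR, List.map_cons, List.map_append, List.sum_cons, List.sum_append,
      List.map_nil, List.sum_nil, add_zero, List.sum_cons]
    have hsum : ∑ u ∈ Finset.Ico (a+1) (a+(k+1)+1), w u
        = (∑ u ∈ Finset.Ico (a+1) (a+k+1), w u) + w (a+k+1) := by
      rw [show a+(k+1)+1 = (a+k+1)+1 from rfl]
      exact Finset.sum_Ico_succ_top (by omega) _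
    rw [ih, hsum]
    ring

lemma wL_sum (w : ℕ → ℝ) (t m : ℕ) (L : List ℕ) (hm : m ≤ t) :
    ((wL t L m).map w).sum = (L.map w).sum + 2 * ∑ u ∈ Finset.Ico (t - m) t, w u := by
  induction m with
  | zero => simp [wL]
  | succ m ih =>
    simp only [wL, List.map_cons, List.map_append, List.sum_cons, List.sum_append,
      List.map_nil, List.sum_nil, add_zero]
    rw [ih (by omega), Finset.sum_eq_sum_Ico_succ_bot (by omega : t - (m+1) < t),
      show t - (m+1) + 1 = t - m by omega]
    ring

lemma prod_conv {l : List ℕ} (hl : ∀ u ∈ l, u + 1 < n) :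
    (l.map fun t => Equiv.swap (t : Fin n) ((t + 1 : ℕ) : Fin n)).prod = (l.map (sw n)).prod := by
  congr 1
  rw [bind_pure_comp, List.map_eq_map, List.map_map]
  refine List.map_congr_left fun a ha => ?_
  simp only [Function.comp_apply, sw]
  congr 2
  rw [val_natCast_of_lt (by have := hl a ha; omega)]

lemma construct (w : ℕ → ℝ) (i j : Fin n) (t0 : ℕ) (h1 : (i : ℕ) ≤ t0) (h2 : t0 < (j : ℕ)) :
    ∃ l : List ℕ, (∀ t ∈ l, t + 1 < n) ∧ (l.map (sw n)).prod = Equiv.swap i j ∧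
      (l.map w).sum = 2 * (∑ t ∈ Finset.Ico (i : ℕ) (j : ℕ), w t) - w t0 := by
  have hjn : (j : ℕ) < n := j.isLt
  set k := (j : ℕ) - t0 - 1 with hk
  set m := t0 - (i : ℕ) with hm
  refine ⟨wL t0 (wR t0 k) m, ?_, ?_, ?_⟩
  · intro u hu
    rcases wL_mem (by omega) hu with h | h
    · have := wR_mem h; omega
    · omega
  · have hR : ((wR t0 k).map (sw n)).prod
        = Equiv.swap (t0 : Fin n) (((j : ℕ) : Fin n)) := by
      rw [wR_prod (by omega)]
      congr 2
      omega
    have := wL_prod (n := n) (L := wR t0 k) (b := (j : ℕ)) (by omega : m ≤ t0) h2 hjn hR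
    rw [this, show t0 - m = (i : ℕ) by omega, Fin.cast_val_eq_self, Fin.cast_val_eq_self]
  · rw [wL_sum w t0 m _ (by omega), wR_sum, show t0 - m = (i : ℕ) by omega]
    have e1 : ∑ t ∈ Finset.Ico (i : ℕ) (j : ℕ), w t
        = (∑ t ∈ Finset.Ico (i : ℕ) t0, w t) + ∑ t ∈ Finset.Ico t0 (j : ℕ), w t :=
      (Finset.sum_Ico_consecutive _ h1 (by omega)).symm
    have e2 : ∑ t ∈ Finset.Ico t0 (j : ℕ), w t = w t0 + ∑ t ∈ Finset.Ico (t0+1) (j : ℕ), w t :=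
      Finset.sum_eq_sum_Ico_succ_bot (by omega) _
    have e3 : t0 + k + 1 = (j : ℕ) := by omega
    rw [e1, e2, e3]
    ring

/-- with nonnegative weights `w t` on the adjacent transpositions
`swap t (t+1)` of `Fin n` (for `t + 1 < n`), and `i < j` in `Fin n`, the minimum total
weight (with multiplicity) of a decomposition of `swap i j` into adjacent transpositions
equals `2 Σ_{t=i}^{j−1} w t − max_{i ≤ t ≤ j−1} w t`. -/
theorem stmt7 {n : ℕ} [NeZero n] (w : ℕ → ℝ) (hw : ∀ t, t + 1 < n → 0 ≤ w t)
    (i j : Fin n) (hij : i < j) :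
    sInf {c : ℝ | ∃ l : List ℕ, (∀ t ∈ l, t + 1 < n) ∧
        (l.map fun t => Equiv.swap (t : Fin n) ((t + 1 : ℕ) : Fin n)).prod
          = Equiv.swap i j ∧
        (l.map w).sum = c}
      = 2 * (∑ t ∈ Finset.Ico (i : ℕ) (j : ℕ), w t)
        - sSup (w '' Set.Ico (i : ℕ) (j : ℕ)) := by
  classical
  have hiv : (i : ℕ) < (j : ℕ) := hij
  have hjn : (j : ℕ) < n := j.isLt
  -- the sSup is a max attained at t0
  have hne : (Finset.Ico (i : ℕ) (j : ℕ)).Nonempty := Finset.nonempty_Ico.mpr hiv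
  set S := (Finset.Ico (i : ℕ) (j : ℕ)).image w with hS
  have hSne : S.Nonempty := hne.image w
  have hsup : sSup (w '' Set.Ico (i : ℕ) (j : ℕ)) = S.max' hSne := by
    rw [show w '' Set.Ico (i : ℕ) (j : ℕ) = ↑S by rw [hS, Finset.coe_image, Finset.coe_Ico]]
    exact hSne.csSup_eq_max'
  obtain ⟨t0, ht0mem, ht0eq⟩ := Finset.mem_image.mp (S.max'_mem hSne)
  rw [Finset.mem_Ico] at ht0mem
  rw [hsup, ← ht0eq]
  set Sw := ∑ t ∈ Finset.Ico (i : ℕ) (j : ℕ), w t with hSw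
  -- lower bound
  have hlow : ∀ c ∈ {c : ℝ | ∃ l : List ℕ, (∀ t ∈ l, t + 1 < n) ∧
        (l.map fun t => Equiv.swap (t : Fin n) ((t + 1 : ℕ) : Fin n)).prod
          = Equiv.swap i j ∧ (l.map w).sum = c}, 2 * Sw - w t0 ≤ c := by
    rintro c ⟨l, hl, hprod, rfl⟩
    have hprod' : (l.map (sw n)).prod = Equiv.swap i j := (prod_conv hl).symm.trans hprod
    have hcount1 : ∀ u, (i : ℕ) ≤ u → u < (j : ℕ) → 1 ≤ l.count u := fun u h1 h2 =>
      List.count_pos_iff.mpr (mem_of_cut hl hprod' h1 h2)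
    have hsub : Finset.Ico (i : ℕ) (j : ℕ) ⊆ l.toFinset := by
      intro u hu
      rw [Finset.mem_Ico] at hu
      exact List.mem_toFinset.mpr (mem_of_cut hl hprod' hu.1 hu.2)
    have step1 : ∑ u ∈ Finset.Ico (i : ℕ) (j : ℕ), (l.count u) • w u ≤ (l.map w).sum := by
      rw [Finset.sum_list_map_count]
      exact Finset.sum_le_sum_of_subset_of_nonneg hsub
        (fun u hu _ => nsmul_nonneg (hw u (hl u (List.mem_toFinset.mp hu))) _)
    by_cases hex : ∃ t1, ((i : ℕ) ≤ t1 ∧ t1 < (j : ℕ)) ∧ l.count t1 = 1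
    · obtain ⟨t1, ⟨ht1a, ht1b⟩, ht1c⟩ := hex
      have ht1mem : t1 ∈ Finset.Ico (i : ℕ) (j : ℕ) := Finset.mem_Ico.mpr ⟨ht1a, ht1b⟩
      have ht1sup : w t1 ≤ w t0 := by
        rw [ht0eq]
        exact S.le_max' _ (Finset.mem_image_of_mem w ht1mem)
      have step2 : ∑ u ∈ Finset.Ico (i : ℕ) (j : ℕ), (if u = t1 then w u else 2 * w u)
          ≤ ∑ u ∈ Finset.Ico (i : ℕ) (j : ℕ), (l.count u) • w u := by
        refine Finset.sum_le_sum fun u hu => ?_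
        rw [Finset.mem_Ico] at hu
        have hwu : 0 ≤ w u := hw u (by omega)
        rw [nsmul_eq_mul]
        by_cases h : u = t1
        · subst h
          simp only [if_pos rfl]
          calc w u = 1 * w u := (one_mul _).symm
            _ ≤ (l.count u : ℝ) * w u := by
                apply mul_le_mul_of_nonneg_right _ hwu
                exact_mod_cast hcount1 u hu.1 hu.2
        · simp only [if_neg h]
          have h2 : 2 ≤ l.count u := by
            have h1 := hcount1 u hu.1 hu.2
            rcases Nat.lt_or_ge u t1 with hlt | hge
            · have := not_two_ones hl hprod' hu.1 hlt ht1b hiv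
              simp [ht1c] at this
              omega
            · have hgt : t1 < u := by omega
              have := not_two_ones hl hprod' ht1a hgt hu.2 hiv
              simp [ht1c] at this
              omega
          apply mul_le_mul_of_nonneg_right _ hwu
          exact_mod_cast h2
      have step3 : ∑ u ∈ Finset.Ico (i : ℕ) (j : ℕ), (if u = t1 then w u else 2 * w u)
          = 2 * Sw - w t1 := by
        rw [← Finset.add_sum_erase _ _ ht1mem, if_pos rfl, hSw,
          ← Finset.add_sum_erase _ w ht1mem]
        rw [Finset.sum_congr rfl (fun u hu => if_neg (Finset.ne_of_mem_erase hu)),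
          ← Finset.mul_sum]
        ring
      linarith
    · push_neg at hex
      have step2 : ∑ u ∈ Finset.Ico (i : ℕ) (j : ℕ), 2 * w u
          ≤ ∑ u ∈ Finset.Ico (i : ℕ) (j : ℕ), (l.count u) • w u := by
        refine Finset.sum_le_sum fun u hu => ?_
        rw [Finset.mem_Ico] at hu
        have hwu : 0 ≤ w u := hw u (by omega)
        have h2 : 2 ≤ l.count u := by
          have h1 := hcount1 u hu.1 hu.2
          have := hex u ⟨hu.1, hu.2⟩
          omega
        rw [nsmul_eq_mul]
        apply mul_le_mul_of_nonneg_right _ hwu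
        exact_mod_cast h2
      have hwt0 : 0 ≤ w t0 := hw t0 (by omega)
      rw [← Finset.mul_sum] at step2
      linarith
  -- upper bound witness
  obtain ⟨l0, hl0, hprod0, hsum0⟩ := construct w i j t0 ht0mem.1 ht0mem.2
  have hmem : 2 * Sw - w t0 ∈ {c : ℝ | ∃ l : List ℕ, (∀ t ∈ l, t + 1 < n) ∧
        (l.map fun t => Equiv.swap (t : Fin n) ((t + 1 : ℕ) : Fin n)).prod
          = Equiv.swap i j ∧ (l.map w).sum = c} :=
    ⟨l0, hl0, (prod_conv hl0).trans hprod0, hsum0⟩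
  exact le_antisymm (csInf_le ⟨2 * Sw - w t0, hlow⟩ hmem) (le_csInf ⟨_, hmem⟩ hlow)
end

section
/- Let σ ∈ S_n be a cycle of length k and let τ be a transposition decomposition of σ consisting of exactly k − 1 transpositions. Then every transposition of τ swaps two elements of the support of σ, the k − 1 swapped pairs are pairwise distinct, and the simple graph on the support of σ whose edges are these k − 1 pairs is a tree (connected and acyclic). -/
open SimpleGraph

private lemma pair_eq_aux {α : Type*} [DecidableEq α] {a b c d : α} (_hab : a ≠ b)
    (h : ({a, b} : Finset α) = {c, d}) : (a = c ∧ b = d) ∨ (a = d ∧ b = c) := by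
  have h' : ({a, b} : Set α) = {c, d} := by
    have := congrArg (fun s : Finset α => (↑s : Set α)) h
    simpa using this
  rw [Set.pair_eq_pair_iff] at h'
  tauto

private lemma reach_del {V : Type*} {G G' : SimpleGraph V}
    (h : ∀ a b, G.Adj a b → G'.Reachable a b) {x y : V} (p : G.Walk x y) :
    G'.Reachable x y := by
  induction p with
  | nil => exact SimpleGraph.Reachable.refl _
  | cons ha _ ih => exact (h _ _ ha).trans ih

private lemma conn_del {V : Type*} {G : SimpleGraph V} {e : Sym2 V}
    (hc : G.Connected) (hb : ¬ G.IsBridge e) (he : e ∈ G.edgeSet) :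
    (G \ SimpleGraph.fromEdgeSet {e}).Connected := by
  induction e using Sym2.ind with
  | _ v w =>
    rw [SimpleGraph.isBridge_iff] at hb
    push_neg at hb
    have hR : (G \ SimpleGraph.fromEdgeSet {s(v, w)}).Reachable v w :=
      hb
    have key : ∀ a b, G.Adj a b → (G \ SimpleGraph.fromEdgeSet {s(v, w)}).Reachable a b := by
      intro a b hab
      by_cases heq : s(a, b) = s(v, w)
      · rw [Sym2.eq_iff] at heq
        rcases heq with ⟨rfl, rfl⟩ | ⟨rfl, rfl⟩
        · exact hR
        · exact hR.symm
      · refine SimpleGraph.Adj.reachable ?_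
        rw [SimpleGraph.sdiff_adj]
        refine ⟨hab, ?_⟩
        rw [SimpleGraph.fromEdgeSet_adj]
        simp only [Set.mem_singleton_iff]
        tauto
    haveI : Nonempty V := hc.nonempty
    rw [SimpleGraph.connected_iff]
    refine ⟨fun a b => ?_, inferInstance⟩
    obtain ⟨p⟩ := hc.preconnected a b
    exact reach_del key p

private lemma cycle_del {V : Type*} {G : SimpleGraph V} (hc : G.Connected)
    {v : V} {c : G.Walk v v} (hcyc : c.IsCycle) :
    ∃ G' : SimpleGraph V, G'.Connected ∧ G'.edgeSet ⊂ G.edgeSet := by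
  have hlen := hcyc.three_le_length
  have hpos : 0 < c.edges.length := by rw [SimpleGraph.Walk.length_edges]; omega
  obtain ⟨e, he⟩ := List.exists_mem_of_length_pos hpos
  have he' : e ∈ G.edgeSet := c.edges_subset_edgeSet he
  have hb : ¬ G.IsBridge e := fun hbr =>
    ((SimpleGraph.isBridge_iff_forall_cycle_notMem he').mp hbr) c hcyc he
  have hnotin : e ∉ (G \ SimpleGraph.fromEdgeSet {e}).edgeSet := by
    rw [SimpleGraph.edgeSet_sdiff, SimpleGraph.edgeSet_fromEdgeSet]
    simp [he', G.not_isDiag_of_mem_edgeSet he']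
  refine ⟨G \ SimpleGraph.fromEdgeSet {e}, conn_del hc hb he',
    Set.ssubset_iff_subset_ne.mpr ⟨SimpleGraph.edgeSet_mono sdiff_le, fun hEq => ?_⟩⟩
  exact hnotin (hEq ▸ he')

private lemma conn_card_aux : ∀ (m : ℕ) {V : Type*} [Fintype V] (G : SimpleGraph V),
    G.edgeSet.ncard ≤ m → G.Connected → Fintype.card V ≤ G.edgeSet.ncard + 1 := by
  intro m
  induction m with
  | zero =>
    intro V _ G hm hc
    by_cases hacy : G.IsAcyclic
    · classical
      have htree : G.IsTree := ⟨hc, hacy⟩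
      have h1 := htree.card_edgeFinset
      have h2 : G.edgeFinset.card = G.edgeSet.ncard := by
        rw [Set.ncard_eq_toFinset_card']; unfold SimpleGraph.edgeFinset; congr!
      omega
    · rw [SimpleGraph.IsAcyclic] at hacy
      push_neg at hacy
      obtain ⟨v, c, hcyc⟩ := hacy
      have hne : G.edgeSet.Nonempty := by
        have hlen := hcyc.three_le_length
        have hpos : 0 < c.edges.length := by rw [SimpleGraph.Walk.length_edges]; omega
        obtain ⟨e, he⟩ := List.exists_mem_of_length_pos hpos
        exact ⟨e, c.edges_subset_edgeSet he⟩
      have := (Set.ncard_pos (G.edgeSet.toFinite)).mpr hne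
      omega
  | succ m ih =>
    intro V _ G hm hc
    by_cases hacy : G.IsAcyclic
    · classical
      have htree : G.IsTree := ⟨hc, hacy⟩
      have h1 := htree.card_edgeFinset
      have h2 : G.edgeFinset.card = G.edgeSet.ncard := by
        rw [Set.ncard_eq_toFinset_card']; unfold SimpleGraph.edgeFinset; congr!
      omega
    · rw [SimpleGraph.IsAcyclic] at hacy
      push_neg at hacy
      obtain ⟨v, c, hcyc⟩ := hacy
      obtain ⟨G', hc', hss⟩ := cycle_del hc hcyc
      have hlt : G'.edgeSet.ncard < G.edgeSet.ncard :=
        Set.ncard_lt_ncard hss (G.edgeSet.toFinite)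
      have := ih G' (by omega) hc'
      omega

private lemma isTree_of_conn_card {V : Type*} [Fintype V] (G : SimpleGraph V)
    (hc : G.Connected) (hcard : G.edgeSet.ncard + 1 ≤ Fintype.card V) : G.IsTree := by
  refine ⟨hc, ?_⟩
  intro v c hcyc
  obtain ⟨G', hc', hss⟩ := cycle_del hc hcyc
  have hlt : G'.edgeSet.ncard < G.edgeSet.ncard :=
    Set.ncard_lt_ncard hss (G.edgeSet.toFinite)
  have := conn_card_aux (G'.edgeSet.ncard) G' le_rfl hc'
  omega

private lemma reach_prod_s8 {n : ℕ} (L : List (Fin n × Fin n)) {R : Fin n → Fin n → Prop}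
    (h : ∀ p ∈ L, p.1 ≠ p.2 ∧ R p.1 p.2) (x : Fin n) :
    (SimpleGraph.fromRel R).Reachable x ((L.map fun p => Equiv.swap p.1 p.2).prod x) := by
  induction L with
  | nil => simpa using SimpleGraph.Reachable.refl x
  | cons p t ih =>
    have h1 := ih (fun q hq => h q (List.mem_cons_of_mem p hq))
    have h2 : ((p :: t).map fun q => Equiv.swap q.1 q.2).prod x =
        Equiv.swap p.1 p.2 ((t.map fun q => Equiv.swap q.1 q.2).prod x) := by
      rw [List.map_cons, List.prod_cons, Equiv.Perm.mul_apply]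
    rw [h2]
    set y := (t.map fun q => Equiv.swap q.1 q.2).prod x with hy
    obtain ⟨hne, hR⟩ := h p List.mem_cons_self
    refine h1.trans ?_
    by_cases hy1 : y = p.1
    · rw [hy1, Equiv.swap_apply_left]
      exact SimpleGraph.Adj.reachable (by rw [SimpleGraph.fromRel_adj]; exact ⟨hne, Or.inl hR⟩)
    by_cases hy2 : y = p.2
    · rw [hy2, Equiv.swap_apply_right]
      exact SimpleGraph.Adj.reachable
        (by rw [SimpleGraph.fromRel_adj]; exact ⟨hne.symm, Or.inr hR⟩)
    rw [Equiv.swap_apply_of_ne_of_ne hy1 hy2]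

/-- let `σ` be a cycle of length `k` and let `τ` (the list `l` of swapped
pairs) be a transposition decomposition of `σ` with exactly `k − 1` transpositions.
Then every transposition of `τ` swaps two elements of the support of `σ`, the `k − 1`
swapped (unordered) pairs are pairwise distinct, and the simple graph on the support
of `σ` whose edges are these pairs is a tree. -/
theorem stmt8 {n k : ℕ} (hk : 2 ≤ k)
    (σ : Equiv.Perm (Fin n)) (hσ : σ.IsCycle) (hsupp : σ.support.card = k)
    (l : List (Fin n × Fin n)) (hne : ∀ p ∈ l, p.1 ≠ p.2)
    (hlen : l.length = k - 1)
    (hprod : (l.map fun p => Equiv.swap p.1 p.2).prod = σ) :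
    (∀ p ∈ l, p.1 ∈ σ.support ∧ p.2 ∈ σ.support) ∧
    (l.map fun p => ({p.1, p.2} : Finset (Fin n))).Nodup ∧
    ((SimpleGraph.fromRel fun u v => (u, v) ∈ l ∨ (v, u) ∈ l).induce
      (↑σ.support : Set (Fin n))).IsTree := by
  classical
  set G : SimpleGraph (Fin n) :=
    SimpleGraph.fromRel fun u v => (u, v) ∈ l ∨ (v, u) ∈ l with hGdef
  -- Step reachability: each point reaches its image under σ
  have hstep : ∀ x, G.Reachable x (σ x) := by
    intro x
    rw [← hprod]
    exact reach_prod_s8 l (fun p hp => ⟨hne p hp, Or.inl (by simpa using hp)⟩) x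
  have hpow : ∀ (m : ℕ) (x : Fin n), G.Reachable x ((σ ^ m) x) := by
    intro m
    induction m with
    | zero =>
      intro x
      simpa using SimpleGraph.Reachable.refl x
    | succ m ih =>
      intro x
      rw [pow_succ, Equiv.Perm.mul_apply]
      exact (hstep x).trans (ih (σ x))
  obtain ⟨a, ha, -⟩ := id hσ
  set C : Set (Fin n) := {x | G.Reachable a x} with hCdef
  have haC : a ∈ C := SimpleGraph.Reachable.refl a
  have hsuppC : (↑σ.support : Set (Fin n)) ⊆ C := by
    intro y hy
    have hy' : σ y ≠ y := Equiv.Perm.mem_support.mp (Finset.mem_coe.mp hy)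
    obtain ⟨i, hi⟩ := hσ.exists_pow_eq ha hy'
    exact hi ▸ hpow i a
  -- the induced graph on C is connected
  have hindreach : ∀ {x y : Fin n} (w : G.Walk x y) (hx : x ∈ C) (hy : y ∈ C),
      (G.induce C).Reachable ⟨x, hx⟩ ⟨y, hy⟩ := by
    intro x y w
    induction w with
    | nil => intro hx hy; exact SimpleGraph.Reachable.refl _
    | @cons x' z' y' h q ih =>
      intro hx hy
      have hz : z' ∈ C := hx.trans h.reachable
      have hadj : (G.induce C).Adj ⟨x', hx⟩ ⟨z', hz⟩ := h
      exact hadj.reachable.trans (ih hz hy)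
  have hconn : (G.induce C).Connected := by
    haveI : Nonempty ↥C := ⟨⟨a, haC⟩⟩
    rw [SimpleGraph.connected_iff]
    refine ⟨fun x y => ?_, inferInstance⟩
    obtain ⟨w1⟩ := x.2
    obtain ⟨w2⟩ := y.2
    exact (hindreach w1 haC x.2).symm.trans (hindreach w2 haC y.2)
  -- edge counting
  set ψ : Sym2 ↥C → Finset (Fin n) :=
    Sym2.lift ⟨fun u v => {(u : Fin n), (v : Fin n)}, fun u v => Finset.pair_comm _ _⟩ with hψ
  set B : Finset (Finset (Fin n)) :=
    (l.map fun p => ({p.1, p.2} : Finset (Fin n))).toFinset with hB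
  have hmaps : ∀ e ∈ (G.induce C).edgeSet, ψ e ∈ (↑B : Set (Finset (Fin n))) := by
    intro e
    induction e using Sym2.ind with
    | _ u v =>
      intro he
      have hadj : G.Adj ↑u ↑v := (G.induce C).mem_edgeSet.mp he
      rw [hGdef, SimpleGraph.fromRel_adj] at hadj
      have hval : ψ s(u, v) = {(u : Fin n), (v : Fin n)} := rfl
      rw [hval, Finset.mem_coe, hB, List.mem_toFinset, List.mem_map]
      have hl' : (↑u, ↑v) ∈ l ∨ (↑v, ↑u) ∈ l := by tauto
      rcases hl' with h1 | h2
      · exact ⟨(↑u, ↑v), h1, rfl⟩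
      · exact ⟨(↑v, ↑u), h2, (Finset.pair_comm _ _)⟩
  have hinj : Set.InjOn ψ (G.induce C).edgeSet := by
    intro e1 he1 e2 he2 heq
    revert he1 he2 heq
    refine Sym2.inductionOn₂ e1 e2 fun u v s t => ?_
    intro he1 he2 heq
    have h1 : G.Adj ↑u ↑v := (G.induce C).mem_edgeSet.mp he1
    have hne1 : (u : Fin n) ≠ ↑v := h1.ne
    have heq' : ({(u : Fin n), ↑v} : Finset (Fin n)) = {↑s, ↑t} := heq
    rcases pair_eq_aux hne1 heq' with ⟨h3, h4⟩ | ⟨h3, h4⟩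
    · rw [Subtype.ext h3, Subtype.ext h4]
    · rw [Subtype.ext h3, Subtype.ext h4, Sym2.eq_swap]
  have hBle : B.card ≤ k - 1 := by
    rw [hB]
    have h2 := List.toFinset_card_le (l.map fun p => ({p.1, p.2} : Finset (Fin n)))
    rwa [List.length_map, hlen] at h2
  have hEcard : (G.induce C).edgeSet.ncard ≤ k - 1 := by
    have h1 : (G.induce C).edgeSet.ncard ≤ (↑B : Set (Finset (Fin n))).ncard :=
      Set.ncard_le_ncard_of_injOn ψ hmaps hinj (B.finite_toSet)
    rw [Set.ncard_coe_finset] at h1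
    omega
  have hC_card : C.ncard = Fintype.card ↥C := by
    rw [← Nat.card_coe_set_eq, Nat.card_eq_fintype_card]
  have hkC : k ≤ C.ncard := by
    have := Set.ncard_le_ncard hsuppC (Set.toFinite C)
    rwa [Set.ncard_coe_finset, hsupp] at this
  have hupper : Fintype.card ↥C ≤ (G.induce C).edgeSet.ncard + 1 :=
    conn_card_aux _ (G.induce C) le_rfl hconn
  have hCk : C.ncard = k := by omega
  have hE : (G.induce C).edgeSet.ncard = k - 1 := by omega
  have hCsupp : C = (↑σ.support : Set (Fin n)) := by
    refine (Set.eq_of_subset_of_ncard_le hsuppC ?_ (Set.toFinite C)).symm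
    rw [Set.ncard_coe_finset, hsupp, hCk]
  have hAB : ψ '' (G.induce C).edgeSet = (↑B : Set (Finset (Fin n))) := by
    refine Set.eq_of_subset_of_ncard_le (fun x hx => ?_) ?_ (B.finite_toSet)
    · obtain ⟨e, he, rfl⟩ := hx
      exact hmaps e he
    · rw [Set.ncard_coe_finset, Set.ncard_image_of_injOn hinj, hE]
      omega
  have hBcard : B.card = k - 1 := by
    have h3 : (↑B : Set (Finset (Fin n))).ncard = k - 1 := by
      rw [← hAB, Set.ncard_image_of_injOn hinj, hE]
    rwa [Set.ncard_coe_finset] at h3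
  have hmem : ∀ w : ↥C, (w : Fin n) ∈ σ.support := fun w =>
    Finset.mem_coe.mp (hCsupp ▸ w.2)
  have conj1 : ∀ p ∈ l, p.1 ∈ σ.support ∧ p.2 ∈ σ.support := by
    intro p hp
    have hpB : ({p.1, p.2} : Finset (Fin n)) ∈ ψ '' (G.induce C).edgeSet := by
      rw [hAB, Finset.mem_coe, hB, List.mem_toFinset, List.mem_map]
      exact ⟨p, hp, rfl⟩
    obtain ⟨e, he, heψ⟩ := hpB
    revert he heψ
    refine Sym2.ind (fun u v => ?_) e
    intro he heψ
    have heq' : ({(u : Fin n), ↑v} : Finset (Fin n)) = {p.1, p.2} := heψ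
    have h1 : G.Adj ↑u ↑v := (G.induce C).mem_edgeSet.mp he
    rcases pair_eq_aux h1.ne heq' with ⟨h3, h4⟩ | ⟨h3, h4⟩
    · exact ⟨h3 ▸ hmem u, h4 ▸ hmem v⟩
    · exact ⟨h4 ▸ hmem v, h3 ▸ hmem u⟩
  refine ⟨conj1, ?_, ?_⟩
  · -- Nodup
    have hded : (l.map fun p => ({p.1, p.2} : Finset (Fin n))).dedup.length =
        (l.map fun p => ({p.1, p.2} : Finset (Fin n))).length := by
      have hc1 := (l.map fun p => ({p.1, p.2} : Finset (Fin n))).card_toFinset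
      have hl1 : (l.map fun p => ({p.1, p.2} : Finset (Fin n))).length = k - 1 := by
        rw [List.length_map, hlen]
      rw [hB] at hBcard
      omega
    rw [← List.dedup_eq_self]
    exact List.Sublist.eq_of_length (List.dedup_sublist _) hded
  · -- tree
    rw [← hCsupp]
    refine isTree_of_conn_card _ hconn ?_
    rw [hE, ← hC_card, hCk]
    omega
end

section
/- Let 2 ≤ k ≤ n and let σ ∈ S_n be the cycle (1 2 ⋯ k), i.e., σ(i) = i+1 for 1 ≤ i < k, σ(k) = 1, and σ fixes all other elements. Let τ be a transposition decomposition of σ consisting of exactly k − 1 transpositions. If swap(a_1, a_2) and swap(b_1, b_2) both occur in τ, with a_1 < a_2 and b_1 < b_2, and a_1 < b_1 < a_2, then b_2 ≤ a_2 (i.e., the chords {a_1,a_2} and {b_1,b_2} do not cross). -/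
open Fin.NatCast

set_option linter.unusedSectionVars false

namespace Stmt9
open Equiv Equiv.Perm Finset

variable {n : ℕ} [NeZero n]

/-- `b` lies strictly cyclically between `a` and `c` (going upward from `a`). -/
def btw (a b c : Fin n) : Prop :=
  (a.val < b.val ∧ b.val < c.val) ∨ (c.val < a.val ∧ (a.val < b.val ∨ b.val < c.val))

/-- Each cycle of `π` traverses its orbit in increasing cyclic order. -/
def Inc (π : Equiv.Perm (Fin n)) : Prop := ∀ z w, π.SameCycle z w → ¬ btw z w (π z)

/-- Orbits of `π` are pairwise noncrossing. -/
def NCr (π : Equiv.Perm (Fin n)) : Prop := ∀ p q r s : Fin n, π.SameCycle p q →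
  π.SameCycle r s → ¬ π.SameCycle p r → ¬ (btw p r q ∧ btw q s p)

lemma sc_pow (π : Equiv.Perm (Fin n)) (v : Fin n) (m : ℕ) : π.SameCycle v ((π ^ m) v) :=
  ⟨m, by simp⟩

lemma sc_exists {π : Equiv.Perm (Fin n)} {v w : Fin n} (h : π.SameCycle v w) :
    ∃ m : ℕ, (π ^ m) v = w := by
  obtain ⟨i, _, h⟩ := h.exists_pow_eq'; exact ⟨i, h⟩

lemma sc_apply (π : Equiv.Perm (Fin n)) (v : Fin n) : π.SameCycle v (π v) := ⟨1, by simp⟩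

lemma pow_succ_apply (π : Equiv.Perm (Fin n)) (m : ℕ) (v : Fin n) :
    (π ^ (m + 1)) v = π ((π ^ m) v) := by
  rw [pow_succ']; rfl

lemma fix_orbit {π : Equiv.Perm (Fin n)} {u w : Fin n} (hu : π u = u)
    (h : π.SameCycle u w) : w = u := by
  obtain ⟨m, rfl⟩ := sc_exists h
  clear h
  induction m with
  | zero => rfl
  | succ m ih => rw [pow_succ_apply, ih, hu]

section Merge

variable {π : Equiv.Perm (Fin n)} {x y : Fin n}

lemma swap_mul_apply (u : Fin n) : (Equiv.swap x y * π) u = Equiv.swap x y (π u) := rfl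

lemma m1 (hxy : ¬ π.SameCycle x y) :
    ∀ u, π.SameCycle x u → (Equiv.swap x y * π).SameCycle x u := by
  have key : ∀ m : ℕ, (Equiv.swap x y * π).SameCycle x ((π ^ m) x) := by
    intro m; induction m with
    | zero => exact SameCycle.refl _ _
    | succ m ih =>
      have hsc : π.SameCycle x ((π ^ m) x) := sc_pow π x m
      rw [pow_succ_apply]
      by_cases hpx : π ((π ^ m) x) = x
      · rw [hpx]
      · have hpy : π ((π ^ m) x) ≠ y := by
          intro h
          exact hxy (by rw [← h]; exact hsc.trans (sc_apply π _))
        have hst : (Equiv.swap x y * π) ((π ^ m) x) = π ((π ^ m) x) := by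
          rw [swap_mul_apply, Equiv.swap_apply_of_ne_of_ne hpx hpy]
        rw [← hst]
        exact ih.trans (sc_apply _ _)
  intro u hu; obtain ⟨m, rfl⟩ := sc_exists hu; exact key m

lemma m2 (hxy : ¬ π.SameCycle x y) : (Equiv.swap x y * π).SameCycle x y := by
  have hz : π (π⁻¹ x) = x := π.apply_symm_apply x
  have h0 : π.SameCycle (π⁻¹ x) x := ⟨1, by rw [zpow_one]; exact hz⟩
  have h1 : π.SameCycle x (π⁻¹ x) := h0.symm
  have h2 : (Equiv.swap x y * π).SameCycle x (π⁻¹ x) := m1 hxy _ h1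
  have h3 : (Equiv.swap x y * π) (π⁻¹ x) = y := by
    rw [swap_mul_apply, hz, Equiv.swap_apply_left]
  have h4 := sc_apply (Equiv.swap x y * π) (π⁻¹ x)
  rw [h3] at h4
  exact h2.trans h4

lemma u1_pow {v : Fin n} (hvx : ¬ π.SameCycle v x) (hvy : ¬ π.SameCycle v y) :
    ∀ m : ℕ, ((Equiv.swap x y * π) ^ m) v = (π ^ m) v := by
  intro m; induction m with
  | zero => rfl
  | succ m ih =>
    have h1 : π ((π ^ m) v) ≠ x := by
      intro h; exact hvx (by rw [← h]; exact (sc_pow π v m).trans (sc_apply π _))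
    have h2 : π ((π ^ m) v) ≠ y := by
      intro h; exact hvy (by rw [← h]; exact (sc_pow π v m).trans (sc_apply π _))
    rw [pow_succ_apply, pow_succ_apply, ih, swap_mul_apply,
      Equiv.swap_apply_of_ne_of_ne h1 h2]

lemma u1 {v w : Fin n} (hvx : ¬ π.SameCycle v x) (hvy : ¬ π.SameCycle v y) :
    (Equiv.swap x y * π).SameCycle v w ↔ π.SameCycle v w := by
  constructor
  · intro h; obtain ⟨m, rfl⟩ := sc_exists h; rw [u1_pow hvx hvy]; exact sc_pow π v m
  · intro h; obtain ⟨m, rfl⟩ := sc_exists h; rw [← u1_pow hvx hvy]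
    exact sc_pow (Equiv.swap x y * π) v m

lemma dec (hxy : ¬ π.SameCycle x y) : ∀ m : ℕ,
    π.SameCycle x (((Equiv.swap x y * π) ^ m) x) ∨
    π.SameCycle y (((Equiv.swap x y * π) ^ m) x) := by
  intro m; induction m with
  | zero => exact Or.inl (SameCycle.refl _ _)
  | succ m ih =>
    set u := ((Equiv.swap x y * π) ^ m) x with hu
    rw [pow_succ_apply, ← hu, swap_mul_apply]
    rcases ih with h | h
    · by_cases hpx : π u = x
      · rw [hpx, Equiv.swap_apply_left]; right; exact SameCycle.refl _ _
      · have hpy : π u ≠ y := by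
          intro he; exact hxy (h.trans (by rw [← he]; exact sc_apply π u))
        rw [Equiv.swap_apply_of_ne_of_ne hpx hpy]
        exact Or.inl (h.trans (sc_apply π u))
    · by_cases hpy : π u = y
      · rw [hpy, Equiv.swap_apply_right]; left; exact SameCycle.refl _ _
      · have hpx : π u ≠ x := by
          intro he
          exact hxy ((h.trans (by rw [← he]; exact sc_apply π u)).symm)
        rw [Equiv.swap_apply_of_ne_of_ne hpx hpy]
        exact Or.inr (h.trans (sc_apply π u))

lemma mer (hxy : ¬ π.SameCycle x y) {w : Fin n} :
    (Equiv.swap x y * π).SameCycle x w ↔ (π.SameCycle x w ∨ π.SameCycle y w) := by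
  constructor
  · intro h; obtain ⟨m, rfl⟩ := sc_exists h; exact dec hxy m
  · rintro (h | h)
    · exact m1 hxy _ h
    · have hyx : ¬ π.SameCycle y x := fun h' => hxy h'.symm
      have := m1 hyx _ h
      rw [Equiv.swap_comm] at this
      exact (m2 hxy).trans this

lemma smono (hxy : ¬ π.SameCycle x y) {v w : Fin n} (h : π.SameCycle v w) :
    (Equiv.swap x y * π).SameCycle v w := by
  by_cases hvx : π.SameCycle v x
  · exact ((m1 hxy v hvx.symm).symm.trans (m1 hxy w (hvx.symm.trans h)))
  · by_cases hvy : π.SameCycle v y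
    · have hyx : ¬ π.SameCycle y x := fun h' => hxy h'.symm
      have e : Equiv.swap x y * π = Equiv.swap y x * π := by rw [Equiv.swap_comm]
      rw [e]
      exact ((m1 hyx v hvy.symm).symm.trans (m1 hyx w (hvy.symm.trans h)))
    · exact (u1 hvx hvy).mpr h

end Merge

section Count

/-- The orbit of `v` under `π` as a `Finset`. -/
def orb (π : Equiv.Perm (Fin n)) (v : Fin n) : Finset (Fin n) :=
  Finset.univ.filter (π.SameCycle v ·)

/-- Number of orbits (cycles, including fixed points) of `π`. -/
def cN (π : Equiv.Perm (Fin n)) : ℕ := (Finset.univ.image (orb π)).card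

lemma mem_orb {π : Equiv.Perm (Fin n)} {v w : Fin n} : w ∈ orb π v ↔ π.SameCycle v w := by
  simp [orb]

lemma self_mem_orb (π : Equiv.Perm (Fin n)) (v : Fin n) : v ∈ orb π v :=
  mem_orb.mpr (SameCycle.refl _ _)

lemma orb_eq_iff {π : Equiv.Perm (Fin n)} {v w : Fin n} :
    orb π v = orb π w ↔ π.SameCycle v w := by
  constructor
  · intro h
    have := self_mem_orb π w
    rw [← h] at this
    exact mem_orb.mp this
  · intro h
    ext u
    simp only [mem_orb]
    exact ⟨fun h' => h.symm.trans h', fun h' => h.trans h'⟩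

lemma merge_card {π : Equiv.Perm (Fin n)} {x y : Fin n} (hxy : ¬ π.SameCycle x y) :
    cN (Equiv.swap x y * π) + 1 = cN π := by
  classical
  set π' := Equiv.swap x y * π with hπ'
  set A := orb π x with hA
  set B := orb π y with hB
  set M := A ∪ B with hM
  set O := Finset.univ.image (orb π) with hO
  have hAB : A ≠ B := fun h => hxy (orb_eq_iff.mp h)
  have horb' : ∀ v, (π.SameCycle v x ∨ π.SameCycle v y) → orb π' v = M := by
    intro v hv
    have hvx' : π'.SameCycle x v := by
      rcases hv with h | h
      · exact (mer hxy).mpr (Or.inl h.symm)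
      · exact (mer hxy).mpr (Or.inr h.symm)
    ext w
    simp only [mem_orb, hM, Finset.mem_union, hA, hB, mem_orb]
    constructor
    · intro h
      exact ((mer hxy).mp (hvx'.trans h)).imp id id
    · intro h
      refine hvx'.symm.trans ?_
      exact (mer hxy).mpr h
  have horb'' : ∀ v, ¬ (π.SameCycle v x ∨ π.SameCycle v y) → orb π' v = orb π v := by
    intro v hv
    push_neg at hv
    ext w
    simp only [mem_orb]
    exact u1 hv.1 hv.2
  have hMO : M ∉ O := by
    intro h
    rw [hO, Finset.mem_image] at h
    obtain ⟨v, -, hv⟩ := h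
    have hx : x ∈ orb π v := by rw [hv, hM]; exact Finset.mem_union_left _ (self_mem_orb π x)
    have hy : y ∈ orb π v := by rw [hv, hM]; exact Finset.mem_union_right _ (self_mem_orb π y)
    exact hxy ((mem_orb.mp hx).symm.trans (mem_orb.mp hy))
  have hset : Finset.univ.image (orb π') = insert M ((O.erase A).erase B) := by
    ext C
    simp only [Finset.mem_image, Finset.mem_insert, Finset.mem_erase]
    constructor
    · rintro ⟨v, -, rfl⟩
      by_cases hv : π.SameCycle v x ∨ π.SameCycle v y
      · exact Or.inl (horb' v hv)
      · push_neg at hv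
        refine Or.inr ⟨?_, ?_, Finset.mem_image.mpr
          ⟨v, Finset.mem_univ v, (horb'' v (by push_neg; exact hv)).symm⟩⟩
        · rw [horb'' v (by push_neg; exact hv), hB]
          exact fun h => hv.2 (orb_eq_iff.mp h)
        · rw [horb'' v (by push_neg; exact hv), hA]
          exact fun h => hv.1 (orb_eq_iff.mp h)
    · rintro (rfl | ⟨hCB, hCA, hC⟩)
      · exact ⟨x, Finset.mem_univ x, horb' x (Or.inl (SameCycle.refl _ _))⟩
      · rw [hO, Finset.mem_image] at hC
        obtain ⟨v, -, rfl⟩ := hC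
        have hv : ¬ (π.SameCycle v x ∨ π.SameCycle v y) := by
          rintro (h | h)
          · exact hCA (by rw [hA]; exact orb_eq_iff.mpr h)
          · exact hCB (by rw [hB]; exact orb_eq_iff.mpr h)
        exact ⟨v, Finset.mem_univ v, horb'' v hv⟩
  have hAO : A ∈ O := Finset.mem_image.mpr ⟨x, Finset.mem_univ x, rfl⟩
  have hBO : B ∈ (O.erase A) := Finset.mem_erase.mpr
    ⟨fun h => hAB h.symm, Finset.mem_image.mpr ⟨y, Finset.mem_univ y, rfl⟩⟩
  have hMnot : M ∉ (O.erase A).erase B := fun h => hMO (Finset.mem_of_mem_erase (Finset.mem_of_mem_erase h))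
  have hcard : cN π' = ((O.erase A).erase B).card + 1 := by
    rw [cN, hset, Finset.card_insert_of_notMem hMnot]
  rw [hcard, Finset.card_erase_of_mem hBO, Finset.card_erase_of_mem hAO]
  have h2 : 2 ≤ O.card := by
    have := Finset.card_le_card (Finset.insert_subset hAO
      (Finset.singleton_subset_iff.mpr (Finset.mem_of_mem_erase hBO)))
    rwa [Finset.card_insert_of_notMem (by simp [hAB]), Finset.card_singleton] at this
  rw [cN, ← hO]
  omega

lemma toggle {π : Equiv.Perm (Fin n)} {x y : Fin n} (hxy : π.SameCycle x y) (hne : x ≠ y) :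
    ¬ (Equiv.swap x y * π).SameCycle x y := by
  set π' := Equiv.swap x y * π with hπ'
  -- claim: π'-orbit of y never meets x
  have base0 : ∀ s ≤ 0, (π ^ s) y ≠ x := by
    intro s hs
    have : s = 0 := by omega
    subst this
    simp only [pow_zero, Equiv.Perm.one_apply]
    exact fun h => hne h.symm
  have key : ∀ m : ℕ, ∃ t : ℕ, (π' ^ m) y = (π ^ t) y ∧ ∀ s, s ≤ t → (π ^ s) y ≠ x := by
    intro m; induction m with
    | zero => exact ⟨0, rfl, base0⟩
    | succ m ih =>
      obtain ⟨t, ht, hno⟩ := ih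
      have hu : (π' ^ (m + 1)) y = Equiv.swap x y (π ((π ^ t) y)) := by
        rw [pow_succ_apply, ht]; rfl
      by_cases hx : π ((π ^ t) y) = x
      · refine ⟨0, ?_, base0⟩
        rw [hu, hx, Equiv.swap_apply_left, pow_zero, Equiv.Perm.one_apply]
      · by_cases hy : π ((π ^ t) y) = y
        · exfalso
          have hper : (π ^ (t + 1)) y = y := by rw [pow_succ_apply, hy]
          obtain ⟨r, hr⟩ := sc_exists hxy.symm
          have hmod : ∀ q : ℕ, (π ^ (q * (t + 1))) y = y := by
            intro q; induction q with
            | zero => simp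
            | succ q ihq =>
              have : (q + 1) * (t + 1) = q * (t + 1) + (t + 1) := by ring
              rw [this, pow_add, Equiv.Perm.mul_apply, hper, ihq]
          have hrx : (π ^ (r % (t + 1))) y = x := by
            have h1 : (π ^ (r % (t + 1))) ((π ^ ((r / (t + 1)) * (t + 1))) y)
                = (π ^ r) y := by
              rw [← Equiv.Perm.mul_apply, ← pow_add]
              rw [Nat.mod_add_div']
            rw [hmod] at h1
            rw [h1, hr]
          have hlt : r % (t + 1) < t + 1 := Nat.mod_lt r (by omega)
          exact hno (r % (t + 1)) (by omega) hrx
        · refine ⟨t + 1, ?_, ?_⟩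
          · rw [hu, Equiv.swap_apply_of_ne_of_ne hx hy, pow_succ_apply]
          · intro s hs
            rcases Nat.lt_or_ge s (t + 1) with h | h
            · exact hno s (by omega)
            · have : s = t + 1 := by omega
              rw [this, pow_succ_apply]; exact hx
  intro hcon
  obtain ⟨m, hm⟩ := sc_exists hcon.symm
  -- hm : (π'^m) y = x
  obtain ⟨t, ht, hno⟩ := key m
  exact hno t le_rfl (by rw [← ht]; exact hm)

lemma split_card {π : Equiv.Perm (Fin n)} {x y : Fin n} (hxy : π.SameCycle x y) (hne : x ≠ y) :
    cN (Equiv.swap x y * π) = cN π + 1 := by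
  have h1 : ¬ (Equiv.swap x y * π).SameCycle x y := toggle hxy hne
  have h2 := merge_card h1
  have h3 : Equiv.swap x y * (Equiv.swap x y * π) = π := by
    rw [← mul_assoc, Equiv.swap_mul_self, one_mul]
  rw [h3] at h2
  omega

lemma cN_one : cN (1 : Equiv.Perm (Fin n)) = n := by
  have h : ∀ v : Fin n, orb (1 : Equiv.Perm (Fin n)) v = {v} := by
    intro v; ext w; simp [mem_orb, Equiv.Perm.sameCycle_one, eq_comm]
  have : Finset.univ.image (orb (1 : Equiv.Perm (Fin n))) =
      Finset.univ.image (fun v : Fin n => ({v} : Finset (Fin n))) := by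
    apply Finset.image_congr; intro v _; exact h v
  rw [cN, this, Finset.card_image_of_injective _ (fun a b hab => by
    simpa using hab), Finset.card_univ, Fintype.card_fin]

end Count

section Chain

/-- Product of the list of swaps. -/
def prodL (L : List (Fin n × Fin n)) : Equiv.Perm (Fin n) :=
  (L.map fun p => Equiv.swap p.1 p.2).prod

lemma prodL_cons (p : Fin n × Fin n) (L : List (Fin n × Fin n)) :
    prodL (p :: L) = Equiv.swap p.1 p.2 * prodL L := by
  simp [prodL]

lemma ca : ∀ L : List (Fin n × Fin n), (∀ p ∈ L, p.1 ≠ p.2) →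
    n ≤ cN (prodL L) + L.length := by
  intro L
  induction L with
  | nil => intro _; simp [prodL, cN_one]
  | cons p L' ih =>
    intro hne
    have ih' := ih (fun q hq => hne q (List.mem_cons_of_mem p hq))
    have hl : (p :: L').length = L'.length + 1 := rfl
    rw [prodL_cons]
    by_cases h : (prodL L').SameCycle p.1 p.2
    · have := split_card h (hne p (List.mem_cons_self))
      omega
    · have := merge_card h
      omega

lemma cb {p : Fin n × Fin n} {L' : List (Fin n × Fin n)}
    (hne : ∀ q ∈ p :: L', q.1 ≠ q.2)
    (heq : cN (prodL (p :: L')) + (p :: L').length = n) :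
    ¬ (prodL L').SameCycle p.1 p.2 ∧ cN (prodL L') + L'.length = n := by
  have hca := ca L' (fun q hq => hne q (List.mem_cons_of_mem p hq))
  have hl : (p :: L').length = L'.length + 1 := rfl
  rw [prodL_cons] at heq
  by_cases h : (prodL L').SameCycle p.1 p.2
  · have := split_card h (hne p (List.mem_cons_self))
    omega
  · have := merge_card h
    exact ⟨h, by omega⟩

lemma pers (u v : Fin n) : ∀ L : List (Fin n × Fin n), (∀ p ∈ L, p.1 ≠ p.2) →
    (cN (prodL L) + L.length = n) → (∃ p ∈ L, p = (u, v) ∨ p = (v, u)) →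
    (prodL L).SameCycle u v := by
  intro L
  induction L with
  | nil => rintro _ _ ⟨p, hp, -⟩; simp at hp
  | cons p L' ih =>
    intro hne heq hmem
    obtain ⟨hmerge, heq'⟩ := cb hne heq
    rw [prodL_cons]
    obtain ⟨q, hq, hquv⟩ := hmem
    rcases List.mem_cons.mp hq with rfl | hq'
    · rcases hquv with rfl | rfl
      · exact m2 hmerge
      · exact (m2 hmerge).symm
    · exact smono hmerge (ih (fun r hr => hne r (List.mem_cons_of_mem p hr)) heq' ⟨q, hq', hquv⟩)

end Chain

section Core

/-- cyclic distance from `z` up to `u`. -/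
def dd (z u : Fin n) : ℕ := if z.val ≤ u.val then u.val - z.val else u.val + n - z.val

lemma dd_eq_zero_iff {z u : Fin n} : dd z u = 0 ↔ u = z := by
  have h1 := u.isLt; have h2 := z.isLt
  rw [Fin.ext_iff]
  unfold dd; split_ifs <;> omega

lemma dd_self (z : Fin n) : dd z z = 0 := dd_eq_zero_iff.mpr rfl

lemma btw_dd {a b c : Fin n} : btw a b c ↔ (0 < dd a b ∧ dd a b < dd a c) := by
  have h1 := a.isLt; have h2 := b.isLt; have h3 := c.isLt
  unfold btw dd; split_ifs <;> omega

lemma step {ρ : Equiv.Perm (Fin n)} (hinc : Inc ρ) {z v : Fin n}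
    (hscv : ρ.SameCycle z v) (hvz : v ≠ z) :
    ρ v = z ∨ dd z v < dd z (ρ v) := by
  have hfix : ρ v ≠ v := by
    intro h; exact hvz (fix_orbit h hscv.symm).symm
  have hbtw : ¬ btw v z (ρ v) := hinc v z hscv.symm
  by_cases hvzz : ρ v = z
  · exact Or.inl hvzz
  · right
    have h1 := v.isLt; have h2 := z.isLt; have h3 := (ρ v).isLt
    have hq1 : v.val ≠ z.val := fun h => hvz (Fin.ext h)
    have hq2 : (ρ v).val ≠ v.val := fun h => hfix (Fin.ext h)
    have hq3 : (ρ v).val ≠ z.val := fun h => hvzz (Fin.ext h)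
    unfold btw at hbtw; unfold dd; split_ifs at * <;> omega

lemma core {π : Equiv.Perm (Fin n)} {x y z : Fin n} (hxy : ¬ π.SameCycle x y)
    (hinc : Inc (Equiv.swap x y * π)) (hz : π z = x) (hzx : z ≠ x) :
    (∀ w, π.SameCycle z w → ¬ btw z w x) ∧ (∀ v, π.SameCycle y v → btw z v x) := by
  set π' := Equiv.swap x y * π with hπ'def
  have hne_xy : x ≠ y := fun h => hxy (h ▸ SameCycle.refl π x)
  have hπ'z : π' z = y := by
    rw [hπ'def, swap_mul_apply, hz, Equiv.swap_apply_left]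
  have hsczx : π.SameCycle z x := ⟨1, by rw [zpow_one]; exact hz⟩
  have hsc'zx : π'.SameCycle z x := smono hxy hsczx
  have hex : ∃ j, 0 < j ∧ (π' ^ j) z = x := by
    obtain ⟨m, hm⟩ := sc_exists hsc'zx
    rcases Nat.eq_zero_or_pos m with rfl | hpos
    · exact absurd hm hzx
    · exact ⟨m, hpos, hm⟩
  obtain ⟨j0, ⟨hj0pos, hj0x⟩, hj0min⟩ :
      ∃ j0, (0 < j0 ∧ (π' ^ j0) z = x) ∧ ∀ m, m < j0 → ¬(0 < m ∧ (π' ^ m) z = x) :=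
    ⟨Nat.find hex, Nat.find_spec hex, fun m hm => Nat.find_min hex hm⟩
  have hF0 : ∀ r, 1 ≤ r → r ≤ j0 → (π' ^ r) z ≠ z := by
    intro r h1 h2 hcon
    rcases eq_or_lt_of_le h2 with rfl | hlt
    · exact hzx (hcon.symm.trans hj0x)
    · have hshift : (π' ^ j0) z = (π' ^ (j0 - r)) z := by
        have he : j0 = (j0 - r) + r := by omega
        conv_lhs => rw [he]
        rw [pow_add, Equiv.Perm.mul_apply, hcon]
      exact hj0min (j0 - r) (by omega) ⟨by omega, by rw [← hshift]; exact hj0x⟩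
  have hstep1 : ∀ t, 1 ≤ t → t < j0 →
      dd z ((π' ^ t) z) < dd z ((π' ^ (t + 1)) z) := by
    intro t h1 h2
    rcases step hinc (sc_pow π' z t) (hF0 t h1 (by omega)) with h | h
    · exact absurd (by rw [pow_succ_apply]; exact h) (hF0 (t + 1) (by omega) (by omega))
    · rwa [pow_succ_apply]
  have hmono : ∀ t, t ≤ j0 → ∀ s, 1 ≤ s → s < t →
      dd z ((π' ^ s) z) < dd z ((π' ^ t) z) := by
    intro t
    induction t with
    | zero => intro _ s _ h; omega
    | succ t iht =>
      intro ht s h1 h2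
      rcases Nat.lt_or_ge s t with h | h
      · exact (iht (by omega) s h1 h).trans (hstep1 t (by omega) (by omega))
      · have : s = t := by omega
        subst this
        exact hstep1 s h1 (by omega)
  have hj0gt1 : 1 < j0 := by
    rcases Nat.lt_or_ge 1 j0 with h | h
    · exact h
    · exfalso
      have : j0 = 1 := by omega
      rw [this, pow_one, hπ'z] at hj0x
      exact hne_xy hj0x.symm
  have hF2 : ∀ m : ℕ, ∃ t, 1 ≤ t ∧ t < j0 ∧ (π' ^ t) z = (π ^ m) y := by
    intro m; induction m with
    | zero => exact ⟨1, le_rfl, hj0gt1, by rw [pow_one, pow_zero, hπ'z]; rfl⟩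
    | succ m ih =>
      obtain ⟨t, h1, h2, ht⟩ := ih
      have hyp : π.SameCycle y (π ((π ^ m) y)) := (sc_pow π y m).trans (sc_apply π _)
      by_cases hyy : π ((π ^ m) y) = y
      · exact ⟨1, le_rfl, hj0gt1, by rw [pow_one, pow_succ_apply, hyy, hπ'z]⟩
      · have hyx : π ((π ^ m) y) ≠ x := by
          intro h; rw [h] at hyp; exact hxy hyp.symm
        refine ⟨t + 1, by omega, ?_, ?_⟩
        · rcases Nat.lt_or_ge (t + 1) j0 with h | h
          · exact h
          · exfalso
            have he : t + 1 = j0 := by omega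
            have : (π' ^ (t + 1)) z = π ((π ^ m) y) := by
              rw [pow_succ_apply, ht, hπ'def, swap_mul_apply,
                Equiv.swap_apply_of_ne_of_ne hyx hyy]
            rw [he, hj0x] at this
            exact hyx this.symm
        · rw [pow_succ_apply, ht, hπ'def, swap_mul_apply,
            Equiv.swap_apply_of_ne_of_ne hyx hyy, pow_succ_apply]
  have hN3 : ∀ v, π.SameCycle y v → btw z v x := by
    intro v hv
    obtain ⟨m, rfl⟩ := sc_exists hv
    obtain ⟨t, h1, h2, ht⟩ := hF2 m
    rw [btw_dd, ← ht]
    constructor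
    · rcases Nat.eq_zero_or_pos (dd z ((π' ^ t) z)) with h | h
      · exact absurd (dd_eq_zero_iff.mp h) (hF0 t h1 (by omega))
      · exact h
    · have := hmono j0 le_rfl t h1 h2
      rwa [hj0x] at this
  have hchain : ∀ m : ℕ, (π ^ m) x = z ∨
      ∃ t, j0 ≤ t ∧ (π' ^ t) z = (π ^ m) x ∧ dd z x ≤ dd z ((π ^ m) x) ∧
        ∀ r, 1 ≤ r → r ≤ t → (π' ^ r) z ≠ z := by
    intro m; induction m with
    | zero =>
      right
      exact ⟨j0, le_rfl, by rw [pow_zero]; exact hj0x, by rw [pow_zero]; rfl, hF0⟩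
    | succ m ih =>
      rcases ih with h | ⟨t, htj, htz, hd, hnr⟩
      · right
        refine ⟨j0, le_rfl, ?_, ?_, hF0⟩
        · rw [pow_succ_apply, h, hz]; exact hj0x
        · rw [pow_succ_apply, h, hz]
      · have huz : (π ^ m) x ≠ z := by rw [← htz]; exact hnr t (by omega) le_rfl
        have hscu : π'.SameCycle z ((π ^ m) x) := by rw [← htz]; exact sc_pow π' z t
        have hpuy : π ((π ^ m) x) ≠ y := by
          intro h
          apply hxy
          have : π.SameCycle x (π ((π ^ m) x)) := (sc_pow π x m).trans (sc_apply π _)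
          rwa [h] at this
        have hpux : π ((π ^ m) x) ≠ x := by
          intro h
          exact huz (π.injective (h.trans hz.symm))
        have hπ'u : π' ((π ^ m) x) = π ((π ^ m) x) := by
          rw [hπ'def, swap_mul_apply, Equiv.swap_apply_of_ne_of_ne hpux hpuy]
        rcases step hinc hscu huz with h | h
        · left
          rw [pow_succ_apply, ← hπ'u]; exact h
        · right
          rw [hπ'u] at h
          have hxz : dd z x ≠ 0 := fun hc => hzx (dd_eq_zero_iff.mp hc).symm
          refine ⟨t + 1, by omega, ?_, by rw [pow_succ_apply]; omega, ?_⟩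
          · rw [pow_succ_apply, htz, hπ'u, ← pow_succ_apply]
          · intro r hr1 hr2
            rcases Nat.lt_or_ge r (t + 1) with hrr | hrr
            · exact hnr r hr1 (by omega)
            · have : r = t + 1 := by omega
              subst this
              rw [pow_succ_apply, htz, hπ'u]
              intro hcon
              rw [hcon] at h
              rw [dd_self] at h
              omega
  have hN2 : ∀ w, π.SameCycle z w → ¬ btw z w x := by
    intro w hw
    obtain ⟨m, rfl⟩ := sc_exists (hsczx.symm.trans hw)
    rcases hchain m with h | ⟨t, -, -, hd, -⟩
    · rw [h]
      intro hb
      rw [btw_dd, dd_self] at hb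
      omega
    · intro hb
      rw [btw_dd] at hb
      omega
  exact ⟨hN2, hN3⟩

end Core

section Back

lemma back {π : Equiv.Perm (Fin n)} {x y : Fin n} (hxy : ¬ π.SameCycle x y)
    (hinc : Inc (Equiv.swap x y * π)) : Inc π := by
  intro z w hzw
  by_cases hzx : π z = x
  · by_cases hzz : z = x
    · have hfz : π z = z := by rw [hzx, hzz]
      have hw : w = z := fix_orbit hfz hzw
      rw [hw, hfz]
      rw [btw_dd, dd_self]; omega
    · rw [hzx]; exact (core hxy hinc hzx hzz).1 w hzw
  · by_cases hzy : π z = y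
    · by_cases hzz : z = y
      · have hfz : π z = z := by rw [hzy, hzz]
        have hw : w = z := fix_orbit hfz hzw
        rw [hw, hfz]
        rw [btw_dd, dd_self]; omega
      · have hyx : ¬ π.SameCycle y x := fun h => hxy h.symm
        have hinc' : Inc (Equiv.swap y x * π) := by rwa [Equiv.swap_comm]
        rw [hzy]; exact (core hyx hinc' hzy hzz).1 w hzw
    · have heq : (Equiv.swap x y * π) z = π z := by
        rw [swap_mul_apply, Equiv.swap_apply_of_ne_of_ne hzx hzy]
      have := hinc z w (smono hxy hzw)
      rwa [heq] at this

lemma nback {π : Equiv.Perm (Fin n)} {x y : Fin n} (hxy : ¬ π.SameCycle x y)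
    (hinc : Inc (Equiv.swap x y * π)) (hnc : NCr (Equiv.swap x y * π)) : NCr π := by
  intro p q r s hpq hrs hpr hcross
  by_cases hpr' : (Equiv.swap x y * π).SameCycle p r
  · have hp : π.SameCycle p x ∨ π.SameCycle p y := by
      by_contra hc; push_neg at hc
      exact hpr ((u1 hc.1 hc.2).mp hpr')
    have hr : π.SameCycle r x ∨ π.SameCycle r y := by
      by_contra hc; push_neg at hc
      exact hpr ((u1 hc.1 hc.2).mp hpr'.symm).symm
    have main : ∀ (x' y' : Fin n), ¬ π.SameCycle x' y' → Inc (Equiv.swap x' y' * π) →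
        π.SameCycle p x' → π.SameCycle r y' → False := by
      intro x' y' hxy' hinc'' hpx hry
      by_cases hfx : π x' = x'
      · have hpp : p = x' := fix_orbit hfx hpx.symm
        have hqq : q = x' := fix_orbit hfx (hpx.symm.trans hpq)
        have hb := hcross.1
        rw [hpp, hqq] at hb
        rw [btw_dd, dd_self] at hb; omega
      · have hzx' : π (π⁻¹ x') = x' := π.apply_symm_apply x'
        have hzz : π⁻¹ x' ≠ x' := by
          intro h; rw [h] at hzx'; exact hfx hzx'
        obtain ⟨hN2, hN3⟩ := core hxy' hinc'' hzx' hzz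
        have hscz : π.SameCycle (π⁻¹ x') x' := ⟨1, by rw [zpow_one]; exact hzx'⟩
        have h2p : ¬ btw (π⁻¹ x') p x' := hN2 p (hscz.trans hpx.symm)
        have h2q : ¬ btw (π⁻¹ x') q x' := hN2 q (hscz.trans (hpx.symm.trans hpq))
        have h3r : btw (π⁻¹ x') r x' := hN3 r hry.symm
        have h3s : btw (π⁻¹ x') s x' := hN3 s (hry.symm.trans hrs)
        obtain ⟨hc1, hc2⟩ := hcross
        unfold btw at h2p h2q h3r h3s hc1 hc2
        omega
    rcases hp with hpx | hpy
    · rcases hr with hrx | hry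
      · exact hpr (hpx.trans hrx.symm)
      · exact main x y hxy hinc hpx hry
    · rcases hr with hrx | hry
      · have hyx : ¬ π.SameCycle y x := fun h => hxy h.symm
        exact main y x hyx (by rwa [Equiv.swap_comm]) hpy hrx
      · exact hpr (hpy.trans hry.symm)
  · exact hnc p q r s (smono hxy hpq) (smono hxy hrs) hpr' hcross

end Back

section Sigma

variable {k : ℕ} {σ : Equiv.Perm (Fin n)}

lemma sigma_lt_k (hk2 : 2 ≤ k) (hkn : k ≤ n)
    (hσ1 : ∀ i : Fin n, (i : ℕ) + 1 < k → σ i = (((i : ℕ) + 1 : ℕ) : Fin n))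
    (hσ2 : σ ((k - 1 : ℕ) : Fin n) = ((0 : ℕ) : Fin n))
    {u : Fin n} (hu : u.val < k) : (σ u).val < k := by
  have hn0 : 0 < n := Nat.pos_of_ne_zero (NeZero.ne n)
  rcases Nat.lt_or_ge (u.val + 1) k with h | h
  · rw [hσ1 u h, Fin.val_cast_of_lt (by omega)]; omega
  · have huv : u.val = k - 1 := by omega
    have hcv : ((k - 1 : ℕ) : Fin n).val = k - 1 := Fin.val_cast_of_lt (by omega)
    have hu' : u = ((k - 1 : ℕ) : Fin n) := Fin.ext (by omega)
    rw [hu', hσ2]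
    have : ((0 : ℕ) : Fin n).val = 0 := by simp
    omega

lemma sigma_orbit_lt (hk2 : 2 ≤ k) (hkn : k ≤ n)
    (hσ1 : ∀ i : Fin n, (i : ℕ) + 1 < k → σ i = (((i : ℕ) + 1 : ℕ) : Fin n))
    (hσ2 : σ ((k - 1 : ℕ) : Fin n) = ((0 : ℕ) : Fin n))
    {u : Fin n} (hu : u.val < k) : ∀ w, σ.SameCycle u w → w.val < k := by
  intro w hw
  obtain ⟨m, rfl⟩ := sc_exists hw
  clear hw
  induction m with
  | zero => exact hu
  | succ m ih =>
    rw [pow_succ_apply]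
    exact sigma_lt_k hk2 hkn hσ1 hσ2 ih

lemma sigma_pow_zero (hk2 : 2 ≤ k) (hkn : k ≤ n)
    (hσ1 : ∀ i : Fin n, (i : ℕ) + 1 < k → σ i = (((i : ℕ) + 1 : ℕ) : Fin n)) :
    ∀ i, i < k → (σ ^ i) ((0 : ℕ) : Fin n) = ((i : ℕ) : Fin n) := by
  intro i
  induction i with
  | zero => intro _; rw [pow_zero]; rfl
  | succ i ih =>
    intro hi
    have hii := ih (by omega)
    rw [pow_succ_apply, hii, hσ1 _ (by rw [Fin.val_cast_of_lt (by omega)]; omega),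
      Fin.val_cast_of_lt (by omega)]

lemma sigma_sc (hk2 : 2 ≤ k) (hkn : k ≤ n)
    (hσ1 : ∀ i : Fin n, (i : ℕ) + 1 < k → σ i = (((i : ℕ) + 1 : ℕ) : Fin n))
    {u v : Fin n} (hu : u.val < k) (hv : v.val < k) : σ.SameCycle u v := by
  have h0 : ∀ w : Fin n, w.val < k → σ.SameCycle ((0 : ℕ) : Fin n) w := by
    intro w hw
    refine ⟨w.val, ?_⟩
    rw [zpow_natCast, sigma_pow_zero hk2 hkn hσ1 w.val hw, Fin.cast_val_eq_self]
  exact (h0 u hu).symm.trans (h0 v hv)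

lemma sigma_inc (hk2 : 2 ≤ k) (hkn : k ≤ n)
    (hσ1 : ∀ i : Fin n, (i : ℕ) + 1 < k → σ i = (((i : ℕ) + 1 : ℕ) : Fin n))
    (hσ2 : σ ((k - 1 : ℕ) : Fin n) = ((0 : ℕ) : Fin n))
    (hσ3 : ∀ i : Fin n, k ≤ (i : ℕ) → σ i = i) : Inc σ := by
  intro z w hzw
  rcases Nat.lt_or_ge z.val k with hzk | hzk
  · rcases Nat.lt_or_ge (z.val + 1) k with h | h
    · have hval : (σ z).val = z.val + 1 := by
        rw [hσ1 z h, Fin.val_cast_of_lt (by omega)]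
      intro hb; unfold btw at hb; omega
    · have huv : z.val = k - 1 := by omega
      have hcv : ((k - 1 : ℕ) : Fin n).val = k - 1 := Fin.val_cast_of_lt (by omega)
      have hz' : z = ((k - 1 : ℕ) : Fin n) := Fin.ext (by omega)
      have hσz : (σ z).val = 0 := by
        rw [hz', hσ2]; simp
      have hwk : w.val < k := sigma_orbit_lt hk2 hkn hσ1 hσ2 hzk w hzw
      intro hb; unfold btw at hb; omega
  · have hfz : σ z = z := hσ3 z hzk
    have hw : w = z := fix_orbit hfz hzw
    rw [hw, hfz, btw_dd, dd_self]; omega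

lemma sigma_ncr (hk2 : 2 ≤ k) (hkn : k ≤ n)
    (hσ1 : ∀ i : Fin n, (i : ℕ) + 1 < k → σ i = (((i : ℕ) + 1 : ℕ) : Fin n))
    (hσ3 : ∀ i : Fin n, k ≤ (i : ℕ) → σ i = i) : NCr σ := by
  intro p q r s hpq hrs hpr hcross
  by_cases hppq : p = q
  · have hb := hcross.1
    rw [hppq] at hb
    rw [btw_dd, dd_self] at hb; omega
  · by_cases hrrs : r = s
    · obtain ⟨h1, h2⟩ := hcross
      rw [hrrs] at h1
      unfold btw at h1 h2; omega
    · have hpk : p.val < k := by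
        by_contra hc
        exact hppq (fix_orbit (hσ3 p (by omega)) hpq).symm
      have hrk : r.val < k := by
        by_contra hc
        exact hrrs (fix_orbit (hσ3 r (by omega)) hrs).symm
      exact hpr (sigma_sc hk2 hkn hσ1 hpk hrk)

set_option maxHeartbeats 1000000 in
lemma sigma_cN (hk2 : 2 ≤ k) (hkn : k ≤ n)
    (hσ1 : ∀ i : Fin n, (i : ℕ) + 1 < k → σ i = (((i : ℕ) + 1 : ℕ) : Fin n)) :
    cN σ + k ≤ n + 1 := by
  classical
  set O := Finset.univ.image (orb σ) with hO
  have hsum : (Finset.univ : Finset (Fin n)).card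
      = ∑ B ∈ O, (Finset.univ.filter (fun v => orb σ v = B)).card :=
    Finset.card_eq_sum_card_image (orb σ) Finset.univ
  set B0 := orb σ ((0 : ℕ) : Fin n) with hB0
  have hB0O : B0 ∈ O := Finset.mem_image.mpr ⟨_, Finset.mem_univ _, rfl⟩
  have hfiber : k ≤ (Finset.univ.filter (fun v => orb σ v = B0)).card := by
    have hsub : (Finset.range k).image (fun i => ((i : ℕ) : Fin n)) ⊆
        Finset.univ.filter (fun v => orb σ v = B0) := by
      intro v hv
      obtain ⟨i, hi, rfl⟩ := Finset.mem_image.mp hv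
      rw [Finset.mem_range] at hi
      refine Finset.mem_filter.mpr ⟨Finset.mem_univ _, ?_⟩
      rw [hB0]
      refine orb_eq_iff.mpr ?_
      refine sigma_sc hk2 hkn hσ1 ?_ ?_
      · rw [Fin.val_cast_of_lt (by omega)]; omega
      · simp only [Nat.cast_zero, Fin.val_zero]; omega
    have hcard : ((Finset.range k).image (fun i => ((i : ℕ) : Fin n))).card = k := by
      rw [Finset.card_image_of_injOn, Finset.card_range]
      intro i hi j hj hij
      rw [Finset.mem_coe, Finset.mem_range] at hi hj
      have h2 : ((i : ℕ) : Fin n) = ((j : ℕ) : Fin n) := hij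
      have h3 := congrArg Fin.val h2
      rw [Fin.val_cast_of_lt (by omega), Fin.val_cast_of_lt (by omega)] at h3
      exact h3
    calc k = ((Finset.range k).image (fun i => ((i : ℕ) : Fin n))).card := hcard.symm
    _ ≤ _ := Finset.card_le_card hsub
  have hrest : O.card - 1 ≤ ∑ B ∈ O.erase B0, (Finset.univ.filter (fun v => orb σ v = B)).card := by
    have h1 : ∀ B ∈ O.erase B0, 1 ≤ (Finset.univ.filter (fun v => orb σ v = B)).card := by
      intro B hB
      obtain ⟨v, -, rfl⟩ := Finset.mem_image.mp (Finset.mem_of_mem_erase hB)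
      refine Finset.card_pos.mpr ⟨v, Finset.mem_filter.mpr ⟨Finset.mem_univ _, rfl⟩⟩
    have := Finset.card_nsmul_le_sum (O.erase B0) _ 1 h1
    rw [smul_eq_mul, mul_one] at this
    rwa [Finset.card_erase_of_mem hB0O] at this
  have hsplit : (Finset.univ.filter (fun v => orb σ v = B0)).card
      + ∑ B ∈ O.erase B0, (Finset.univ.filter (fun v => orb σ v = B)).card
      = ∑ B ∈ O, (Finset.univ.filter (fun v => orb σ v = B)).card :=
    Finset.add_sum_erase O (fun B => (Finset.univ.filter (fun v => orb σ v = B)).card) hB0O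
  have hn : (Finset.univ : Finset (Fin n)).card = n := by
    rw [Finset.card_univ, Fintype.card_fin]
  have hO2 : 1 ≤ O.card := Finset.card_pos.mpr ⟨B0, hB0O⟩
  rw [cN, ← hO]
  omega

end Sigma

section Final

lemma final {a₁ a₂ b₁ b₂ : Fin n} (h12 : a₁.val < b₁.val) (h23 : b₁.val < a₂.val)
    (h34 : a₂.val < b₂.val) :
    ∀ L : List (Fin n × Fin n), (∀ p ∈ L, p.1 ≠ p.2) → (cN (prodL L) + L.length = n) →
    Inc (prodL L) → NCr (prodL L) →
    (∃ p ∈ L, p = (a₁, a₂) ∨ p = (a₂, a₁)) →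
    (∃ p ∈ L, p = (b₁, b₂) ∨ p = (b₂, b₁)) → False := by
  intro L
  induction L with
  | nil => rintro _ _ _ _ ⟨p, hp, -⟩ _; simp at hp
  | cons p L' ih =>
    intro hne heq hinc hncr hA hB
    have hne' : ∀ q ∈ L', q.1 ≠ q.2 := fun q hq => hne q (List.mem_cons_of_mem p hq)
    obtain ⟨hmerge, heq'⟩ := cb hne heq
    rw [prodL_cons] at hinc hncr
    set π := prodL L' with hπdef
    have hinc' : Inc π := back hmerge hinc
    have hncr' : NCr π := nback hmerge hinc hncr
    obtain ⟨pa, hpa, hpaeq⟩ := hA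
    obtain ⟨pb, hpb, hpbeq⟩ := hB
    rcases List.mem_cons.mp hpa with rfl | hpa'
    · -- head is the a-edge
      rcases List.mem_cons.mp hpb with rfl | hpb'
      · -- head is both edges: impossible
        rcases hpaeq with h | h <;> rcases hpbeq with h' | h' <;>
          (rw [h] at h'; injection h' with e1 e2) <;>
          (first
            | (exact absurd (congrArg Fin.val e1) (by omega))
            | (exact absurd (congrArg Fin.val e2) (by omega)))
      · -- b-edge applied earlier
        have hbb : π.SameCycle b₁ b₂ := pers b₁ b₂ L' hne' heq' ⟨pb, hpb', hpbeq⟩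
        have hmA : ¬ π.SameCycle a₁ a₂ := by
          rcases hpaeq with h | h <;> rw [h] at hmerge
          · exact hmerge
          · exact fun hc => hmerge hc.symm
        have hincT : Inc (Equiv.swap a₁ a₂ * π) := by
          rcases hpaeq with h | h <;> rw [h] at hinc
          · exact hinc
          · rwa [Equiv.swap_comm]
        have hncrT : NCr (Equiv.swap a₁ a₂ * π) := by
          rcases hpaeq with h | h <;> rw [h] at hncr
          · exact hncr
          · rwa [Equiv.swap_comm]
        by_cases hc1 : π.SameCycle b₁ a₁
        · have hfa : π a₁ ≠ a₁ := by
            intro h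
            have := fix_orbit h hc1.symm
            exact absurd (congrArg Fin.val this) (by omega)
          have hz : π (π⁻¹ a₁) = a₁ := π.apply_symm_apply a₁
          have hzz : π⁻¹ a₁ ≠ a₁ := by intro h; rw [h] at hz; exact hfa hz
          obtain ⟨hN2, hN3⟩ := core hmA hincT hz hzz
          have hscz : π.SameCycle (π⁻¹ a₁) a₁ := ⟨1, by rw [zpow_one]; exact hz⟩
          have h2 : ¬ btw (π⁻¹ a₁) b₂ a₁ := hN2 b₂ (hscz.trans (hc1.symm.trans hbb))
          have h3 : btw (π⁻¹ a₁) a₂ a₁ := hN3 a₂ (SameCycle.refl π a₂)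
          unfold btw at h2 h3; omega
        · by_cases hc2 : π.SameCycle b₁ a₂
          · have hmA2 : ¬ π.SameCycle a₂ a₁ := fun h => hmA h.symm
            have hincT2 : Inc (Equiv.swap a₂ a₁ * π) := by rwa [Equiv.swap_comm]
            have hfa : π a₂ ≠ a₂ := by
              intro h
              have := fix_orbit h hc2.symm
              exact absurd (congrArg Fin.val this) (by omega)
            have hz : π (π⁻¹ a₂) = a₂ := π.apply_symm_apply a₂
            have hzz : π⁻¹ a₂ ≠ a₂ := by intro h; rw [h] at hz; exact hfa hz
            obtain ⟨hN2, hN3⟩ := core hmA2 hincT2 hz hzz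
            have hscz : π.SameCycle (π⁻¹ a₂) a₂ := ⟨1, by rw [zpow_one]; exact hz⟩
            have h2 : ¬ btw (π⁻¹ a₂) b₁ a₂ := hN2 b₁ (hscz.trans hc2.symm)
            have h3 : btw (π⁻¹ a₂) a₁ a₂ := hN3 a₁ (SameCycle.refl π a₁)
            unfold btw at h2 h3; omega
          · have hx1 : (Equiv.swap a₁ a₂ * π).SameCycle a₁ a₂ := m2 hmA
            have hx2 : (Equiv.swap a₁ a₂ * π).SameCycle b₁ b₂ := smono hmA hbb
            have hx3 : ¬ (Equiv.swap a₁ a₂ * π).SameCycle a₁ b₁ := by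
              intro hcon
              exact hc1 ((u1 hc1 hc2).mp hcon.symm)
            apply hncrT a₁ a₂ b₁ b₂ hx1 hx2 hx3
            constructor <;> (unfold btw; omega)
    · rcases List.mem_cons.mp hpb with rfl | hpb'
      · -- a-edge applied earlier, head is b-edge
        have haa : π.SameCycle a₁ a₂ := pers a₁ a₂ L' hne' heq' ⟨pa, hpa', hpaeq⟩
        have hmB : ¬ π.SameCycle b₁ b₂ := by
          rcases hpbeq with h | h <;> rw [h] at hmerge
          · exact hmerge
          · exact fun hc => hmerge hc.symm
        have hincT : Inc (Equiv.swap b₁ b₂ * π) := by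
          rcases hpbeq with h | h <;> rw [h] at hinc
          · exact hinc
          · rwa [Equiv.swap_comm]
        have hncrT : NCr (Equiv.swap b₁ b₂ * π) := by
          rcases hpbeq with h | h <;> rw [h] at hncr
          · exact hncr
          · rwa [Equiv.swap_comm]
        by_cases hc1 : π.SameCycle a₁ b₁
        · have hfb : π b₁ ≠ b₁ := by
            intro h
            have := fix_orbit h hc1.symm.symm.symm
            exact absurd (congrArg Fin.val (fix_orbit h hc1.symm)) (by omega)
          have hz : π (π⁻¹ b₁) = b₁ := π.apply_symm_apply b₁
          have hzz : π⁻¹ b₁ ≠ b₁ := by intro h; rw [h] at hz; exact hfb hz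
          obtain ⟨hN2, hN3⟩ := core hmB hincT hz hzz
          have hscz : π.SameCycle (π⁻¹ b₁) b₁ := ⟨1, by rw [zpow_one]; exact hz⟩
          have h2 : ¬ btw (π⁻¹ b₁) a₁ b₁ := hN2 a₁ (hscz.trans hc1.symm)
          have h3 : btw (π⁻¹ b₁) b₂ b₁ := hN3 b₂ (SameCycle.refl π b₂)
          unfold btw at h2 h3; omega
        · by_cases hc2 : π.SameCycle a₁ b₂
          · have hmB2 : ¬ π.SameCycle b₂ b₁ := fun h => hmB h.symm
            have hincT2 : Inc (Equiv.swap b₂ b₁ * π) := by rwa [Equiv.swap_comm]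
            have hfb : π b₂ ≠ b₂ := by
              intro h
              exact absurd (congrArg Fin.val (fix_orbit h hc2.symm)) (by omega)
            have hz : π (π⁻¹ b₂) = b₂ := π.apply_symm_apply b₂
            have hzz : π⁻¹ b₂ ≠ b₂ := by intro h; rw [h] at hz; exact hfb hz
            obtain ⟨hN2, hN3⟩ := core hmB2 hincT2 hz hzz
            have hscz : π.SameCycle (π⁻¹ b₂) b₂ := ⟨1, by rw [zpow_one]; exact hz⟩
            have h2 : ¬ btw (π⁻¹ b₂) a₂ b₂ := hN2 a₂ (hscz.trans (hc2.symm.trans haa))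
            have h3 : btw (π⁻¹ b₂) b₁ b₂ := hN3 b₁ (SameCycle.refl π b₁)
            unfold btw at h2 h3; omega
          · have hx1 : (Equiv.swap b₁ b₂ * π).SameCycle b₁ b₂ := m2 hmB
            have hx2 : (Equiv.swap b₁ b₂ * π).SameCycle a₁ a₂ := smono hmB haa
            have hx3 : ¬ (Equiv.swap b₁ b₂ * π).SameCycle a₁ b₁ := by
              intro hcon
              exact hc1 ((u1 hc1 hc2).mp hcon)
            apply hncrT a₁ a₂ b₁ b₂ hx2 hx1 hx3
            constructor <;> (unfold btw; omega)
      · exact ih hne' heq' hinc' hncr' ⟨pa, hpa', hpaeq⟩ ⟨pb, hpb', hpbeq⟩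

end Final

end Stmt9

/-- (elements of `{1,…,n}` modeled as `Fin n`, `0`-indexed) let `σ` be the
cycle `(0 1 ⋯ k−1)` and let `τ` (the list `l` of swapped pairs) be a transposition
decomposition of `σ` with exactly `k − 1` transpositions.  If `swap a₁ a₂` and
`swap b₁ b₂` both occur in `τ`, with `a₁ < a₂`, `b₁ < b₂`, and `a₁ < b₁ < a₂`,
then `b₂ ≤ a₂`: the chords do not cross. -/
theorem stmt9 {n k : ℕ} [NeZero n] (hk2 : 2 ≤ k) (hkn : k ≤ n)
    (σ : Equiv.Perm (Fin n))
    (hσ1 : ∀ i : Fin n, (i : ℕ) + 1 < k → σ i = (((i : ℕ) + 1 : ℕ) : Fin n))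
    (hσ2 : σ ((k - 1 : ℕ) : Fin n) = ((0 : ℕ) : Fin n))
    (hσ3 : ∀ i : Fin n, k ≤ (i : ℕ) → σ i = i)
    (l : List (Fin n × Fin n)) (hne : ∀ p ∈ l, p.1 ≠ p.2)
    (hlen : l.length = k - 1)
    (hprod : (l.map fun p => Equiv.swap p.1 p.2).prod = σ)
    (a₁ a₂ b₁ b₂ : Fin n)
    (ha : (a₁, a₂) ∈ l ∨ (a₂, a₁) ∈ l) (hb : (b₁, b₂) ∈ l ∨ (b₂, b₁) ∈ l)
    (ha12 : a₁ < a₂) (hb12 : b₁ < b₂) (h1 : a₁ < b₁) (h2 : b₁ < a₂) :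
    b₂ ≤ a₂ := by
  by_contra hb2
  have h34 : a₂.val < b₂.val := Fin.lt_def.mp (lt_of_not_ge hb2)
  have h12 : a₁.val < b₁.val := Fin.lt_def.mp h1
  have h23 : b₁.val < a₂.val := Fin.lt_def.mp h2
  have hq : Stmt9.prodL l = σ := hprod
  have heq : Stmt9.cN (Stmt9.prodL l) + l.length = n := by
    have hca := Stmt9.ca l hne
    have hcs := Stmt9.sigma_cN (σ := σ) hk2 hkn hσ1
    rw [hq]
    rw [hq] at hca
    omega
  have hinc : Stmt9.Inc (Stmt9.prodL l) := by
    rw [hq]; exact Stmt9.sigma_inc hk2 hkn hσ1 hσ2 hσ3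
  have hncr : Stmt9.NCr (Stmt9.prodL l) := by
    rw [hq]; exact Stmt9.sigma_ncr hk2 hkn hσ1 hσ3
  exact Stmt9.final h12 h23 h34 l hne heq hinc hncr
    (ha.elim (fun h => ⟨_, h, Or.inl rfl⟩) (fun h => ⟨_, h, Or.inr rfl⟩))
    (hb.elim (fun h => ⟨_, h, Or.inl rfl⟩) (fun h => ⟨_, h, Or.inr rfl⟩))
end
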